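/- arXiv:1011.2958 — 5 statements merged into one kernel-verified Lean document; each statement's English description precedes it below -/
import Mathlib

section
/- Suppose 𝒫 is stable under F°-pasting and every P ∈ 𝒫 satisfies the augmentation hypothesis. Then 𝒫 is stable under F̂-pasting: for every P ∈ 𝒫, every F̂-stopping time τ taking finitely many values, every Λ ∈ F̂_τ and all P₁, P₂ ∈ 𝒫(F̂_τ,P), the probability measure P̄ on (Ω,F°_T) determined by ∫ h dP̄ = E^P[1_Λ·E^{P₁}[h|F̂_τ] + 1_{Λᶜ}·E^{P₂}[h|F̂_τ]] for every bounded F°_T-measurable h : Ω → ℝ belongs to 𝒫. -/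
open MeasureTheory Set Filter

noncomputable section

/-- The canonical path space: continuous paths in `ℝ^d` starting at `0`
(paths indexed by `ℝ`; only the restriction to `[0,T]` is ever used). -/
def PathSpace (d : ℕ) : Type :=
  {ω : C(ℝ, EuclideanSpace ℝ (Fin d)) // ω 0 = 0}

/-- The raw σ-algebra `F°_t = σ(B_s ; 0 ≤ s ≤ t)` generated by the canonical process. -/
def rawSA (d : ℕ) (t : ℝ) : MeasurableSpace (PathSpace d) :=
  ⨆ s ∈ Set.Icc (0 : ℝ) t, MeasurableSpace.comap (fun ω : PathSpace d => ω.1 s) inferInstance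

lemma rawSA_mono {d : ℕ} : Monotone (rawSA d) := by
  intro s t hst
  refine iSup₂_le fun u hu => ?_
  exact le_iSup₂_of_le u ⟨hu.1, hu.2.trans hst⟩ le_rfl

/-- The raw filtration `F°`, as a filtration indexed by `ℝ` (constant after time `T`),
with ambient σ-algebra `F°_T`. -/
def rawFilt (T : ℝ) (d : ℕ) : Filtration ℝ (rawSA d T) where
  seq t := rawSA d (min t T)
  mono' := fun _ _ hst => rawSA_mono (min_le_min hst le_rfl)
  le' := fun t => rawSA_mono (min_le_right t T)

/-- A bounded function. -/
def BddFun {α : Type*} (f : α → ℝ) : Prop := ∃ C : ℝ, ∀ x, |f x| ≤ C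

/-- `Y` is a `P`-essential supremum of the family `F` of random variables. -/
def IsEssSupOf {α : Type*} {m0 : MeasurableSpace α} (P : @Measure α m0) (F : Set (α → ℝ))
    (Y : α → ℝ) : Prop :=
  (∀ f ∈ F, f ≤ᵐ[P] Y) ∧ ∀ Z : α → ℝ, (∀ f ∈ F, f ≤ᵐ[P] Z) → Y ≤ᵐ[P] Z

/-- Two measures agree on the σ-algebra `G`. -/
def EqOnSA {α : Type*} {m0 : MeasurableSpace α} (G : MeasurableSpace α)
    (P Q : @Measure α m0) : Prop :=
  ∀ A : Set α, MeasurableSet[G] A → P A = Q A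

/-- `𝔓(G, P) = {P' ∈ 𝔓 : P' = P on G}`. -/
def MSet {α : Type*} {m0 : MeasurableSpace α} (𝔓 : Set (@Measure α m0))
    (G : MeasurableSpace α) (P : @Measure α m0) : Set (@Measure α m0) :=
  {Q ∈ 𝔓 | EqOnSA G Q P}

/-- The family `{E^{P'}[X | G] : P' ∈ 𝔓(G, P)}` of conditional expectations. -/
def condExpFam {α : Type*} {m0 : MeasurableSpace α} (𝔓 : Set (@Measure α m0))
    (G : MeasurableSpace α) (P : @Measure α m0) (X : α → ℝ) : Set (α → ℝ) :=
  {g | ∃ Q ∈ MSet 𝔓 G P, g = condExp G Q X}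

/-- `X ∈ L¹_𝔓` : `mT`-measurable with `sup_{P ∈ 𝔓} E^P[|X|] < ∞`. -/
def MemL1 {α : Type*} {m0 : MeasurableSpace α} (mT : MeasurableSpace α)
    (𝔓 : Set (@Measure α m0)) (X : α → ℝ) : Prop :=
  Measurable[mT] X ∧ (∀ P ∈ 𝔓, Integrable X P) ∧ ∃ M : ℝ, ∀ P ∈ 𝔓, ∫ ω, |X ω| ∂P ≤ M

/-- `Pb` is the pasting of `(P₁, P₂)` over `(Λ, G)` under `P`, characterized through
integrals of bounded measurable functions. -/
def IsPastingOf {α : Type*} {m0 : MeasurableSpace α} (mT : MeasurableSpace α)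
    (G : MeasurableSpace α) (P P₁ P₂ Pb : @Measure α m0) (Λ : Set α) : Prop :=
  ∀ h : α → ℝ, Measurable[mT] h → BddFun h →
    ∫ x, h x ∂Pb
      = ∫ x, (Λ.indicator (condExp G P₁ h) x + Λᶜ.indicator (condExp G P₂ h) x) ∂P

/-- `𝔓` is stable under `F°`-pasting (along finite-valued `F°`-stopping times). -/
def StableUnderPasting (T : ℝ) (d : ℕ)
    (𝔓 : Set (@Measure (PathSpace d) (rawSA d T))) : Prop :=
  ∀ P ∈ 𝔓, ∀ τ : PathSpace d → ℝ, ∀ hτ : IsStoppingTime (rawFilt T d) (fun ω => (τ ω : WithTop ℝ)),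
    (Set.range τ).Finite → (∀ ω, τ ω ∈ Set.Icc (0 : ℝ) T) →
    ∀ Λ : Set (PathSpace d), MeasurableSet[hτ.measurableSpace] Λ →
    ∀ P₁ ∈ MSet 𝔓 hτ.measurableSpace P, ∀ P₂ ∈ MSet 𝔓 hτ.measurableSpace P,
    ∀ Pb : @Measure (PathSpace d) (rawSA d T),
      IsPastingOf (rawSA d T) hτ.measurableSpace P P₁ P₂ Pb Λ → Pb ∈ 𝔓


/-- The right-continuous filtration `F⁺`: `F⁺_t = ∩_{s ∈ (t,T]} F°_s` for `t < T`
and `F⁺_T = F°_T` (realized as `⨅_{s > t} F°_{min s T}`). -/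
def FplusSA (T : ℝ) (d : ℕ) (t : ℝ) : MeasurableSpace (PathSpace d) :=
  ⨅ s ∈ Set.Ioi t, rawSA d (min s T)

lemma FplusSA_mono (T : ℝ) (d : ℕ) : Monotone (FplusSA T d) := by
  intro s t hst
  exact le_iInf₂ fun u hu => iInf₂_le u (lt_of_le_of_lt hst hu)

lemma FplusSA_le (T : ℝ) (d : ℕ) (t : ℝ) : FplusSA T d t ≤ rawSA d T := by
  have h1 : (max t T + 1) ∈ Set.Ioi t := by
    simp only [Set.mem_Ioi]
    have := le_max_left t T
    linarith
  have h2 : min (max t T + 1) T = T := by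
    have := le_max_right t T
    exact min_eq_right (by linarith)
  have := iInf₂_le (f := fun (s : ℝ) (_ : s ∈ Set.Ioi t) => rawSA d (min s T)) (max t T + 1) h1
  rwa [h2] at this

/-- The collection of `𝔓`-polar sets. -/
def IsPolar {α : Type*} {m0 : MeasurableSpace α} (𝔓 : Set (@Measure α m0)) (N : Set α) : Prop :=
  ∀ P ∈ 𝔓, P N = 0

/-- The augmented σ-algebra `F̂_t = σ(F⁺_t ∪ N^𝔓)`. -/
def FhatSA (T : ℝ) (d : ℕ) {m0 : MeasurableSpace (PathSpace d)}
    (𝔓 : Set (@Measure (PathSpace d) m0)) (t : ℝ) : MeasurableSpace (PathSpace d) :=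
  FplusSA T d t ⊔ MeasurableSpace.generateFrom {N | IsPolar 𝔓 N}

/-- The filtration `F̂`, with an ambient σ-algebra `m0` containing `F°_T` and the polar sets
(the measures of `𝔓` being understood as (uniquely) extended to `m0`). -/
def FhatFilt (T : ℝ) (d : ℕ) {m0 : MeasurableSpace (PathSpace d)}
    (𝔓 : Set (@Measure (PathSpace d) m0))
    (hB : rawSA d T ≤ m0)
    (hN : MeasurableSpace.generateFrom {N | IsPolar 𝔓 N} ≤ m0) :
    Filtration ℝ m0 where
  seq t := FhatSA T d 𝔓 t
  mono' := fun _ _ hst => sup_le_sup_right (FplusSA_mono T d hst) _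
  le' := fun t => sup_le ((FplusSA_le T d t).trans hB) hN

/-- The augmentation hypothesis for `P`: every set in `F̂_t` agrees with a set in `F°_t`
up to a `P`-null set, for every `t ∈ [0,T]`. -/
def AugHyp (T : ℝ) (d : ℕ) {m0 : MeasurableSpace (PathSpace d)}
    (𝔓 : Set (@Measure (PathSpace d) m0)) (P : @Measure (PathSpace d) m0) : Prop :=
  ∀ t ∈ Set.Icc (0 : ℝ) T, ∀ A : Set (PathSpace d), MeasurableSet[FhatSA T d 𝔓 t] A →
    ∃ A' : Set (PathSpace d), MeasurableSet[rawSA d t] A' ∧ P (symmDiff A A') = 0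

/-- Stability of `𝔓` under `F°`-pasting, for measures given on the ambient σ-algebra `m0`:
the pasting, which is a measure on `F°_T`, coincides on `F°_T` with an element of `𝔓`. -/
def StableUnderPastingE (T : ℝ) (d : ℕ) {m0 : MeasurableSpace (PathSpace d)}
    (𝔓 : Set (@Measure (PathSpace d) m0)) : Prop :=
  ∀ P ∈ 𝔓, ∀ τ : PathSpace d → ℝ, ∀ hτ : IsStoppingTime (rawFilt T d) (fun ω => (τ ω : WithTop ℝ)),
    (Set.range τ).Finite → (∀ ω, τ ω ∈ Set.Icc (0 : ℝ) T) →
    ∀ Λ : Set (PathSpace d), MeasurableSet[hτ.measurableSpace] Λ →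
    ∀ P₁ ∈ MSet 𝔓 hτ.measurableSpace P, ∀ P₂ ∈ MSet 𝔓 hτ.measurableSpace P,
    ∃ Q ∈ 𝔓, ∀ h : PathSpace d → ℝ, Measurable[rawSA d T] h → BddFun h →
      ∫ x, h x ∂Q
        = ∫ x, (Λ.indicator (condExp hτ.measurableSpace P₁ h) x
            + Λᶜ.indicator (condExp hτ.measurableSpace P₂ h) x) ∂P

/-- A real path which is càdlàg on `[0,T]`: right-continuous on `[0,T)` and with finite
left limits on `(0,T]`. -/
def IsCadlagPath (T : ℝ) (f : ℝ → ℝ) : Prop :=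
  (∀ t ∈ Set.Ico (0 : ℝ) T, Tendsto f (nhdsWithin t (Set.Ioi t)) (nhds (f t))) ∧
  (∀ t ∈ Set.Ioc (0 : ℝ) T, ∃ L : ℝ, Tendsto f (nhdsWithin t (Set.Ico 0 t)) (nhds L))

end


section AuxA
variable {α : Type*} {m0 : MeasurableSpace α}

lemma measure_inter_of_compl_null (P : @Measure α m0) {A E : Set α} (hE : P Eᶜ = 0) :
    P (A ∩ E) = P A := by
  refine le_antisymm (measure_mono inter_subset_left) ?_
  calc P A ≤ P ((A ∩ E) ∪ Eᶜ) := by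
        refine measure_mono fun x hx => ?_
        by_cases h : x ∈ E
        · exact Or.inl ⟨hx, h⟩
        · exact Or.inr h
    _ ≤ P (A ∩ E) + P Eᶜ := measure_union_le _ _
    _ = P (A ∩ E) := by rw [hE, add_zero]

lemma trim_eq_trim' {G : MeasurableSpace α} (hG : G ≤ m0) (P Q : @Measure α m0)
    (hPQ : ∀ A, MeasurableSet[G] A → Q A = P A) : Q.trim hG = P.trim hG :=
  Measure.ext fun s hs => by
    rw [trim_measurableSet_eq hG hs, trim_measurableSet_eq hG hs, hPQ s hs]

lemma integrable_indicator_condexp' {G : MeasurableSpace α} (hG : G ≤ m0)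
    (P Q : @Measure α m0) [IsFiniteMeasure Q]
    (hPQ : ∀ A, MeasurableSet[G] A → Q A = P A)
    {Λ : Set α} (hΛ : MeasurableSet[G] Λ) (h : α → ℝ) :
    Integrable (Λ.indicator (condExp G Q h)) P := by
  have hsm : StronglyMeasurable[G] (Λ.indicator (condExp G Q h)) :=
    StronglyMeasurable.indicator stronglyMeasurable_condExp hΛ
  have hQ : Integrable (Λ.indicator (condExp G Q h)) Q :=
    Integrable.indicator (μ := Q) integrable_condExp (hG _ hΛ)
  have h2 := hQ.trim hG hsm
  rw [trim_eq_trim' hG P Q hPQ] at h2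
  exact integrable_of_integrable_trim hG h2

lemma integral_indicator_condexp' {G : MeasurableSpace α} (hG : G ≤ m0)
    (P Q : @Measure α m0) [IsFiniteMeasure Q]
    (hPQ : ∀ A, MeasurableSet[G] A → Q A = P A)
    {Λ : Set α} (hΛ : MeasurableSet[G] Λ) {h : α → ℝ} (hint : Integrable h Q) :
    ∫ x, Λ.indicator (condExp G Q h) x ∂P = ∫ x in Λ, h x ∂Q := by
  haveI : SigmaFinite (Q.trim hG) := (isFiniteMeasure_trim hG).toSigmaFinite
  have hsm : StronglyMeasurable[G] (Λ.indicator (condExp G Q h)) :=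
    StronglyMeasurable.indicator stronglyMeasurable_condExp hΛ
  rw [integral_trim hG hsm, ← trim_eq_trim' hG P Q hPQ, ← integral_trim hG hsm,
    @integral_indicator _ ℝ m0 _ _ _ _ Q (hG _ hΛ), setIntegral_condExp hG hint hΛ]

lemma mem_stopped_gen {f : Filtration ℝ m0} {τ : α → ℝ}
    (hτ : IsStoppingTime f (fun ω => (τ ω : WithTop ℝ)))
    {u : ℝ} {X : Set α} (hXu : MeasurableSet[f u] X) (hsub : ∀ ω ∈ X, τ ω = u) :
    MeasurableSet[hτ.measurableSpace] X := by
  rw [hτ.measurableSet]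
  refine ⟨(le_iSup (fun t => (f t : MeasurableSpace α)) u) X hXu, ?_⟩
  intro t
  simp only [WithTop.coe_le_coe]
  by_cases hut : u ≤ t
  · have hX : X ∩ {ω | τ ω ≤ t} = X :=
      inter_eq_left.2 fun ω hω => by simp only [mem_setOf_eq, hsub ω hω]; exact hut
    rw [hX]; exact f.mono hut _ hXu
  · have hX : X ∩ {ω | τ ω ≤ t} = ∅ := by
      ext ω; simp only [mem_inter_iff, mem_setOf_eq, mem_empty_iff_false, iff_false, not_and]
      intro hω hle; exact hut ((hsub ω hω) ▸ hle)
    rw [hX]; exact @MeasurableSet.empty _ (f t)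

lemma mem_stopping_of_pieces {f : Filtration ℝ m0} {τ : α → ℝ}
    (hτ : IsStoppingTime f (fun ω => (τ ω : WithTop ℝ)))
    (s : Finset ℝ) (hs : ∀ ω, τ ω ∈ s) {D : Set α}
    (hD : ∀ u ∈ s, MeasurableSet[f u] (D ∩ {ω | τ ω = u})) :
    MeasurableSet[hτ.measurableSpace] D := by
  have hDec : D = ⋃ u ∈ s, (D ∩ {ω | τ ω = u}) := by
    ext ω
    simp only [mem_iUnion, mem_inter_iff, mem_setOf_eq, exists_prop]
    exact ⟨fun h => ⟨τ ω, hs ω, h, rfl⟩, fun ⟨u, _, h, _⟩ => h⟩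
  rw [hDec]
  exact s.measurableSet_biUnion fun u hu =>
    mem_stopped_gen hτ (hD u hu) fun ω hω => hω.2

end AuxA


section AuxB
variable {T : ℝ} {d : ℕ}

lemma rawSA_le_FplusSA' {u t : ℝ} (hut : u ≤ t) (huT : u ≤ T) :
    rawSA d u ≤ FplusSA T d t :=
  le_iInf₂ fun r hr => rawSA_mono (le_min (hut.trans (le_of_lt hr)) huT)

lemma rawSA_le_FhatSA' {m0 : MeasurableSpace (PathSpace d)}
    (𝔓 : Set (@Measure (PathSpace d) m0)) {u t : ℝ} (hut : u ≤ t) (huT : u ≤ T) :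
    rawSA d u ≤ FhatSA T d 𝔓 t :=
  (rawSA_le_FplusSA' hut huT).trans le_sup_left

lemma FhatSA_mono' {m0 : MeasurableSpace (PathSpace d)}
    (𝔓 : Set (@Measure (PathSpace d) m0)) {u t : ℝ} (h : u ≤ t) :
    FhatSA T d 𝔓 u ≤ FhatSA T d 𝔓 t :=
  sup_le_sup_right (FplusSA_mono T d h) _

end AuxB

/-- if `𝔓` is stable under `F°`-pasting and every `P ∈ 𝔓` satisfies the
augmentation hypothesis, then `𝔓` is stable under `F̂`-pasting: the pasting over a
finite-valued `F̂`-stopping time, as a measure on `F°_T`, coincides with an element of `𝔓`. -/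
theorem statement6 {T : ℝ} (hT : 0 < T) {d : ℕ}
    {m0 : MeasurableSpace (PathSpace d)}
    (𝔓 : Set (@Measure (PathSpace d) m0)) (h𝔓 : 𝔓.Nonempty)
    (hprob : ∀ P ∈ 𝔓, IsProbabilityMeasure P)
    (hB : rawSA d T ≤ m0)
    (hN : MeasurableSpace.generateFrom {N | IsPolar 𝔓 N} ≤ m0)
    (hstable : StableUnderPastingE T d 𝔓)
    (hAug : ∀ P ∈ 𝔓, AugHyp T d 𝔓 P)
    (P : @Measure (PathSpace d) m0) (hP : P ∈ 𝔓)
    (τ : PathSpace d → ℝ) (hτ : IsStoppingTime (FhatFilt T d 𝔓 hB hN) (fun ω => (τ ω : WithTop ℝ)))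
    (hτfin : (Set.range τ).Finite) (hτmem : ∀ ω, τ ω ∈ Set.Icc (0 : ℝ) T)
    (Λ : Set (PathSpace d)) (hΛ : MeasurableSet[hτ.measurableSpace] Λ)
    (P₁ : @Measure (PathSpace d) m0) (hP₁ : P₁ ∈ MSet 𝔓 hτ.measurableSpace P)
    (P₂ : @Measure (PathSpace d) m0) (hP₂ : P₂ ∈ MSet 𝔓 hτ.measurableSpace P) :
    ∃ Q ∈ 𝔓, ∀ h : PathSpace d → ℝ, Measurable[rawSA d T] h → BddFun h →
      ∫ x, h x ∂Q
        = ∫ x, (Λ.indicator (condExp hτ.measurableSpace P₁ h) x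
            + Λᶜ.indicator (condExp hτ.measurableSpace P₂ h) x) ∂P := by
  classical
  haveI hPp : IsProbabilityMeasure P := hprob P hP
  haveI hP1p : IsProbabilityMeasure P₁ := hprob P₁ hP₁.1
  haveI hP2p : IsProbabilityMeasure P₂ := hprob P₂ hP₂.1
  set s : Finset ℝ := hτfin.toFinset with hs_def
  have hmem : ∀ ω, τ ω ∈ s := fun ω => hτfin.mem_toFinset.2 ⟨ω, rfl⟩
  have hsIcc : ∀ u ∈ s, u ∈ Set.Icc (0:ℝ) T := by
    intro u hu
    obtain ⟨ω, rfl⟩ := hτfin.mem_toFinset.1 hu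
    exact hτmem ω
  have hτle : ∀ t : ℝ, MeasurableSet[FhatSA T d 𝔓 t] {ω | τ ω ≤ t} := fun t => by
    have := hτ t; simp only [WithTop.coe_le_coe] at this; exact this
  have hΛle : ∀ t : ℝ, MeasurableSet[FhatSA T d 𝔓 t] (Λ ∩ {ω | τ ω ≤ t}) :=
    fun t => by
      have := ((hτ.measurableSet Λ).1 hΛ).2 t; simp only [WithTop.coe_le_coe] at this; exact this
  -- {τ = u} is F̂_u-measurable
  have hτeq : ∀ u ∈ s, MeasurableSet[FhatSA T d 𝔓 u] {ω | τ ω = u} := by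
    intro u hu
    have h1 : {ω | τ ω = u}
        = {ω | τ ω ≤ u} \ ⋃ v ∈ s.filter (· < u), {ω | τ ω ≤ v} := by
      ext ω
      constructor
      · intro hω
        have hωu : τ ω = u := hω
        refine ⟨le_of_eq hωu, ?_⟩
        intro hc
        obtain ⟨v, hv, hωv⟩ := mem_iUnion₂.1 hc
        rw [Finset.mem_filter] at hv
        have : τ ω ≤ v := hωv
        rw [hωu] at this
        exact absurd (lt_of_le_of_lt this hv.2) (lt_irrefl u)
      · rintro ⟨hle, hall⟩
        by_contra hne
        have hlt : τ ω < u := lt_of_le_of_ne hle hne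
        exact hall (mem_iUnion₂.2 ⟨τ ω, Finset.mem_filter.2 ⟨hmem ω, hlt⟩, (le_rfl : τ ω ≤ τ ω)⟩)
    rw [h1]
    refine MeasurableSet.diff (hτle u) (Finset.measurableSet_biUnion _ fun v hv => ?_)
    rw [Finset.mem_filter] at hv
    exact FhatSA_mono' 𝔓 (le_of_lt hv.2) _ (hτle v)
  have hΛτ : ∀ u ∈ s, MeasurableSet[FhatSA T d 𝔓 u] (Λ ∩ {ω | τ ω = u}) := by
    intro u hu
    have he : Λ ∩ {ω | τ ω = u} = (Λ ∩ {ω | τ ω ≤ u}) ∩ {ω | τ ω = u} := by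
      ext ω
      constructor
      · rintro ⟨h5, h6⟩
        exact ⟨⟨h5, le_of_eq h6⟩, h6⟩
      · rintro ⟨⟨h5, _⟩, h6⟩
        exact ⟨h5, h6⟩
    rw [he]
    exact MeasurableSet.inter (hΛle u) (hτeq u hu)
  -- augmentation: choose raw approximations
  have hex : ∀ u : ℝ, ∃ Au Lu : Set (PathSpace d),
      u ∈ s → (MeasurableSet[rawSA d u] Au ∧ P (symmDiff {ω | τ ω = u} Au) = 0 ∧
        MeasurableSet[rawSA d u] Lu ∧ P (symmDiff (Λ ∩ {ω | τ ω = u}) Lu) = 0) := by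
    intro u
    by_cases hu : u ∈ s
    · obtain ⟨Au, hAu1, hAu2⟩ := hAug P hP u (hsIcc u hu) _ (hτeq u hu)
      obtain ⟨Lu, hLu1, hLu2⟩ := hAug P hP u (hsIcc u hu) _ (hΛτ u hu)
      exact ⟨Au, Lu, fun _ => ⟨hAu1, hAu2, hLu1, hLu2⟩⟩
    · exact ⟨∅, ∅, fun h => absurd h hu⟩
  choose A L hAL using hex
  -- building blocks for τ'
  set Bu : ℝ → Set (PathSpace d) := fun u => A u \ ⋃ v ∈ s.filter (· < u), A v with hBu_def
  set E : Set (PathSpace d) := {ω | ∀ u ∈ s, ω ∉ A u} with hE_def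
  obtain ⟨τ', hτ'pos, hτ'neg⟩ : ∃ τ' : PathSpace d → ℝ,
      (∀ ω (hF : (s.filter (fun u => ω ∈ A u)).Nonempty),
        τ' ω = (s.filter (fun u => ω ∈ A u)).min' hF)
      ∧ (∀ ω, ¬(s.filter (fun u => ω ∈ A u)).Nonempty → τ' ω = T) :=
    ⟨fun ω => if hF : (s.filter (fun u => ω ∈ A u)).Nonempty then
        (s.filter (fun u => ω ∈ A u)).min' hF else T,
      fun ω hF => dif_pos hF, fun ω hF => dif_neg hF⟩
  have hτ'val : ∀ ω u, τ' ω = u ↔ ((u ∈ s ∧ ω ∈ Bu u) ∨ (u = T ∧ ω ∈ E)) := by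
    intro ω u
    by_cases hF : (s.filter (fun v => ω ∈ A v)).Nonempty
    · rw [hτ'pos ω hF]
      constructor
      · intro hEq
        have hmemF := Finset.min'_mem _ hF
        rw [hEq, Finset.mem_filter] at hmemF
        left
        refine ⟨hmemF.1, hmemF.2, ?_⟩
        intro hcon
        obtain ⟨v, hv, hωv⟩ := mem_iUnion₂.1 hcon
        rw [Finset.mem_filter] at hv
        have hle := Finset.min'_le (s.filter (fun u => ω ∈ A u)) v (Finset.mem_filter.2 ⟨hv.1, hωv⟩)
        rw [hEq] at hle
        exact absurd (lt_of_le_of_lt hle hv.2) (lt_irrefl u)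
      · rintro (⟨hus, hωA, hnot⟩ | ⟨rfl, hωE⟩)
        · refine le_antisymm (Finset.min'_le _ u (Finset.mem_filter.2 ⟨hus, hωA⟩)) ?_
          by_contra hlt
          push_neg at hlt
          have hmemF := Finset.min'_mem _ hF
          rw [Finset.mem_filter] at hmemF
          exact hnot (mem_iUnion₂.2 ⟨_, Finset.mem_filter.2 ⟨hmemF.1, hlt⟩, hmemF.2⟩)
        · obtain ⟨v, hv⟩ := hF
          rw [Finset.mem_filter] at hv
          exact absurd hv.2 (hωE v hv.1)
    · rw [hτ'neg ω hF]
      constructor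
      · intro hEq
        right
        refine ⟨hEq.symm, ?_⟩
        intro v hv hωv
        exact hF ⟨v, Finset.mem_filter.2 ⟨hv, hωv⟩⟩
      · rintro (⟨hus, hωA, _⟩ | ⟨rfl, _⟩)
        · exact absurd ⟨u, Finset.mem_filter.2 ⟨hus, hωA⟩⟩ hF
        · rfl
  -- measurability of blocks
  have hBmeas : ∀ u ∈ s, MeasurableSet[rawSA d u] (Bu u) := by
    intro u hu
    refine MeasurableSet.diff (hAL u hu).1 (Finset.measurableSet_biUnion _ fun v hv => ?_)
    rw [Finset.mem_filter] at hv
    exact rawSA_mono (le_of_lt hv.2) _ ((hAL v hv.1).1)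
  have hEmeas : MeasurableSet[rawSA d T] E := by
    have hEeq : E = ⋂ u ∈ s, (A u)ᶜ := by
      ext ω
      simp only [hE_def, mem_setOf_eq, mem_iInter, mem_compl_iff]
    rw [hEeq]
    refine Finset.measurableSet_biInter _ fun u hu => MeasurableSet.compl ?_
    exact rawSA_mono (hsIcc u hu).2 _ ((hAL u hu).1)
  -- τ' is a raw stopping time with finitely many values in [0,T]
  have hτ'le : ∀ t : ℝ, {ω | τ' ω ≤ t}
      = (⋃ u ∈ s.filter (· ≤ t), Bu u) ∪ (if T ≤ t then E else ∅) := by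
    intro t
    ext ω
    constructor
    · intro hle
      have hle' : τ' ω ≤ t := hle
      rcases (hτ'val ω (τ' ω)).1 rfl with ⟨hus, hωB⟩ | ⟨hTeq, hωE⟩
      · exact Or.inl (mem_iUnion₂.2 ⟨τ' ω, Finset.mem_filter.2 ⟨hus, hle'⟩, hωB⟩)
      · rw [hTeq] at hle'
        right
        rw [if_pos hle']
        exact hωE
    · intro hmem2
      rcases hmem2 with h1 | h2
      · obtain ⟨u, hu, hωB⟩ := mem_iUnion₂.1 h1
        rw [Finset.mem_filter] at hu
        have heq : τ' ω = u := (hτ'val ω u).2 (Or.inl ⟨hu.1, hωB⟩)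
        show τ' ω ≤ t
        rw [heq]
        exact hu.2
      · by_cases hTt : T ≤ t
        · rw [if_pos hTt] at h2
          have heq : τ' ω = T := (hτ'val ω T).2 (Or.inr ⟨rfl, h2⟩)
          show τ' ω ≤ t
          rw [heq]
          exact hTt
        · rw [if_neg hTt] at h2
          exact absurd h2 (notMem_empty ω)
  have hτ'st : IsStoppingTime (rawFilt T d) (fun ω => (τ' ω : WithTop ℝ)) := by
    intro t
    simp only [WithTop.coe_le_coe]
    show MeasurableSet[rawSA d (min t T)] {ω | τ' ω ≤ t}
    rw [hτ'le t]
    refine MeasurableSet.union (Finset.measurableSet_biUnion _ fun u hu => ?_) ?_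
    · rw [Finset.mem_filter] at hu
      exact rawSA_mono (le_min hu.2 (hsIcc u hu.1).2) _ (hBmeas u hu.1)
    · by_cases hTt : T ≤ t
      · rw [if_pos hTt]
        exact rawSA_mono (le_min hTt le_rfl) _ hEmeas
      · rw [if_neg hTt]
        exact @MeasurableSet.empty _ (rawSA d (min t T))
  have hτ'fin : (Set.range τ').Finite := by
    refine Set.Finite.subset (s.finite_toSet.union (Set.finite_singleton T)) ?_
    rintro x ⟨ω, rfl⟩
    rcases (hτ'val ω (τ' ω)).1 rfl with ⟨hus, _⟩ | ⟨hTeq, _⟩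
    · exact Or.inl hus
    · exact Or.inr (by simp [hTeq])
  have hτ'mem : ∀ ω, τ' ω ∈ Set.Icc (0:ℝ) T := by
    intro ω
    rcases (hτ'val ω (τ' ω)).1 rfl with ⟨hus, _⟩ | ⟨hTeq, _⟩
    · exact hsIcc _ hus
    · rw [hTeq]
      exact ⟨le_of_lt hT, le_rfl⟩
  -- {τ' = u} is rawSA_u-measurable for u ∈ s
  have hτ'eqmeas : ∀ u ∈ s, MeasurableSet[rawSA d u] {ω | τ' ω = u} := by
    intro u hu
    have hset : {ω | τ' ω = u} = Bu u ∪ (if u = T then E else ∅) := by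
      ext ω
      simp only [mem_setOf_eq, mem_union]
      rw [hτ'val ω u]
      constructor
      · rintro (⟨_, h⟩ | ⟨huT, hE2⟩)
        · exact Or.inl h
        · rw [if_pos huT]
          exact Or.inr hE2
      · rintro (h | h)
        · exact Or.inl ⟨hu, h⟩
        · by_cases huT : u = T
          · rw [if_pos huT] at h
            exact Or.inr ⟨huT, h⟩
          · rw [if_neg huT] at h
            exact absurd h (notMem_empty ω)
    rw [hset]
    refine MeasurableSet.union (hBmeas u hu) ?_
    by_cases huT : u = T
    · rw [if_pos huT, huT]
      exact hEmeas
    · rw [if_neg huT]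
      exact @MeasurableSet.empty _ (rawSA d u)
  -- null sets
  have hNnull : P {ω | τ ω ≠ τ' ω} = 0 := by
    have hsub : {ω | τ ω ≠ τ' ω} ⊆ ⋃ u ∈ s, symmDiff {ω | τ ω = u} (A u) := by
      intro ω hω
      by_contra hcon
      apply hω
      have hiff : ∀ u ∈ s, (τ ω = u ↔ ω ∈ A u) := by
        intro u hu
        by_contra hiffn
        refine hcon (mem_iUnion₂.2 ⟨u, hu, ?_⟩)
        rw [Set.mem_symmDiff]
        by_cases h1 : τ ω = u
        · exact Or.inl ⟨h1, fun h2 => hiffn ⟨fun _ => h2, fun _ => h1⟩⟩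
        · by_cases h2 : ω ∈ A u
          · exact Or.inr ⟨h2, h1⟩
          · exact absurd ⟨fun ha => absurd ha h1, fun hb => absurd hb h2⟩ hiffn
      have h1 : ω ∈ A (τ ω) := (hiff _ (hmem ω)).1 rfl
      have h2 : ω ∈ Bu (τ ω) := by
        refine ⟨h1, ?_⟩
        intro hc
        obtain ⟨v, hv, hωv⟩ := mem_iUnion₂.1 hc
        rw [Finset.mem_filter] at hv
        have hvv := (hiff v hv.1).2 hωv
        rw [hvv] at hv
        exact absurd hv.2 (lt_irrefl v)
      exact ((hτ'val ω (τ ω)).2 (Or.inl ⟨hmem ω, h2⟩)).symm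
    refine measure_mono_null hsub (le_antisymm (le_trans (measure_biUnion_finset_le s _) ?_)
      zero_le)
    refine le_of_eq (Finset.sum_eq_zero fun u hu => ?_)
    exact (hAL u hu).2.1
  -- Λ'' and Λ'
  set Λ'' : Set (PathSpace d) := ⋃ u ∈ s, (L u ∩ {ω | τ ω = u}) with hΛ''_def
  set Λ' : Set (PathSpace d) := ⋃ u ∈ s, (L u ∩ {ω | τ' ω = u}) with hΛ'_def
  have hΛ''memiff : ∀ ω, (ω ∈ Λ'' ↔ ω ∈ L (τ ω)) := by
    intro ω
    constructor
    · intro h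
      obtain ⟨u, hu, hLu, hτu⟩ := mem_iUnion₂.1 h
      have hτu' : τ ω = u := hτu
      rw [hτu']
      exact hLu
    · intro h
      exact mem_iUnion₂.2 ⟨τ ω, hmem ω, h, rfl⟩
  have hΛ''null : P (symmDiff Λ Λ'') = 0 := by
    have hsub : symmDiff Λ Λ'' ⊆ ⋃ u ∈ s, symmDiff (Λ ∩ {ω | τ ω = u}) (L u) := by
      intro ω hω
      by_contra hcon
      have hiff : ∀ u ∈ s, ((ω ∈ Λ ∧ τ ω = u) ↔ ω ∈ L u) := by
        intro u hu
        by_contra hiffn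
        refine hcon (mem_iUnion₂.2 ⟨u, hu, ?_⟩)
        rw [Set.mem_symmDiff]
        by_cases h1 : ω ∈ Λ ∧ τ ω = u
        · exact Or.inl ⟨h1, fun h2 => hiffn ⟨fun _ => h2, fun _ => h1⟩⟩
        · by_cases h2 : ω ∈ L u
          · exact Or.inr ⟨h2, h1⟩
          · exact absurd ⟨fun ha => absurd ha h1, fun hb => absurd hb h2⟩ hiffn
      rw [Set.mem_symmDiff] at hω
      rcases hω with ⟨hΛω, hΛ''ω⟩ | ⟨hΛ''ω, hΛω⟩
      · exact hΛ''ω ((hΛ''memiff ω).2 ((hiff _ (hmem ω)).1 ⟨hΛω, rfl⟩))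
      · exact hΛω ((hiff _ (hmem ω)).2 ((hΛ''memiff ω).1 hΛ''ω)).1
    refine measure_mono_null hsub (le_antisymm (le_trans (measure_biUnion_finset_le s _) ?_)
      zero_le)
    refine le_of_eq (Finset.sum_eq_zero fun u hu => ?_)
    exact (hAL u hu).2.2.2
  -- the exceptional set D
  set D : Set (PathSpace d) := {ω | τ ω ≠ τ' ω} ∪ symmDiff Λ Λ'' with hD_def
  have hDnull : P D = 0 := measure_union_null hNnull hΛ''null
  have hΛ''inter : ∀ u ∈ s, Λ'' ∩ {ω | τ ω = u} = L u ∩ {ω | τ ω = u} := by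
    intro u hu
    ext ω
    constructor
    · rintro ⟨hω, hτu⟩
      have hτu' : τ ω = u := hτu
      have := (hΛ''memiff ω).1 hω
      rw [hτu'] at this
      exact ⟨this, hτu⟩
    · rintro ⟨hω, hτu⟩
      have hτu' : τ ω = u := hτu
      refine ⟨(hΛ''memiff ω).2 ?_, hτu⟩
      rw [hτu']
      exact hω
  have hDmeas : MeasurableSet[hτ.measurableSpace] D := by
    refine mem_stopping_of_pieces hτ s hmem fun u hu => ?_
    show MeasurableSet[FhatSA T d 𝔓 u] (D ∩ {ω | τ ω = u})
    have hDu : D ∩ {ω | τ ω = u}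
        = ({ω | τ' ω = u}ᶜ ∩ {ω | τ ω = u}) ∪
          (symmDiff (Λ ∩ {ω | τ ω = u}) (L u ∩ {ω | τ ω = u})) := by
      rw [hD_def, Set.union_inter_distrib_right, Set.inter_symmDiff_distrib_right,
        hΛ''inter u hu]
      congr 1
      ext ω
      constructor
      · rintro ⟨hne, hτu⟩
        have hτu' : τ ω = u := hτu
        refine ⟨?_, hτu⟩
        intro hc
        have hc' : τ' ω = u := hc
        exact hne (hτu'.trans hc'.symm)
      · rintro ⟨hne, hτu⟩
        have hτu' : τ ω = u := hτu
        refine ⟨?_, hτu⟩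
        intro hc
        exact hne (show τ' ω = u from hc ▸ hτu')
    rw [hDu]
    refine MeasurableSet.union
      (MeasurableSet.inter (MeasurableSet.compl
        (rawSA_le_FhatSA' 𝔓 le_rfl (hsIcc u hu).2 _ (hτ'eqmeas u hu))) (hτeq u hu))
      (MeasurableSet.symmDiff (hΛτ u hu)
        (MeasurableSet.inter
          (rawSA_le_FhatSA' 𝔓 le_rfl (hsIcc u hu).2 _ ((hAL u hu).2.2.1)) (hτeq u hu)))
  -- Λ Δ Λ' is contained in D
  have hΛΛ'sub : symmDiff Λ Λ' ⊆ D := by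
    intro ω hω
    by_cases hee : τ ω = τ' ω
    · right
      have hiff : ω ∈ Λ' ↔ ω ∈ Λ'' := by
        constructor
        · intro h
          obtain ⟨u, hu, hLu, hτu⟩ := mem_iUnion₂.1 h
          have hτu' : τ' ω = u := hτu
          exact mem_iUnion₂.2 ⟨u, hu, hLu, hee.trans hτu'⟩
        · intro h
          obtain ⟨u, hu, hLu, hτu⟩ := mem_iUnion₂.1 h
          have hτu' : τ ω = u := hτu
          exact mem_iUnion₂.2 ⟨u, hu, hLu, hee.symm.trans hτu'⟩
      rw [Set.mem_symmDiff] at hω ⊢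
      rcases hω with ⟨h1, h2⟩ | ⟨h1, h2⟩
      · exact Or.inl ⟨h1, fun hc => h2 (hiff.2 hc)⟩
      · exact Or.inr ⟨hiff.1 h1, h2⟩
    · exact Or.inl hee
  -- Λ' belongs to the stopping σ-algebra of τ'
  have hΛ'inter : ∀ u ∈ s, Λ' ∩ {ω | τ' ω = u} = L u ∩ {ω | τ' ω = u} := by
    intro u hu
    ext ω
    constructor
    · rintro ⟨hω, hτu⟩
      have hτu' : τ' ω = u := hτu
      obtain ⟨v, hv, hLv, hτv⟩ := mem_iUnion₂.1 hω
      have hτv' : τ' ω = v := hτv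
      have : v = u := hτv'.symm.trans hτu'
      rw [this] at hLv
      exact ⟨hLv, hτu⟩
    · rintro ⟨hω, hτu⟩
      exact ⟨mem_iUnion₂.2 ⟨u, hu, hω, hτu⟩, hτu⟩
  have hΛ'meas : MeasurableSet[hτ'st.measurableSpace] Λ' := by
    refine mem_stopping_of_pieces hτ'st (insert T s) (fun ω => ?_) (fun u hu => ?_)
    · rcases (hτ'val ω (τ' ω)).1 rfl with ⟨hus, _⟩ | ⟨hTeq, _⟩
      · exact Finset.mem_insert_of_mem hus
      · rw [hTeq]
        exact Finset.mem_insert_self T s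
    · show MeasurableSet[rawSA d (min u T)] (Λ' ∩ {ω | τ' ω = u})
      by_cases hus : u ∈ s
      · rw [hΛ'inter u hus]
        exact MeasurableSet.inter
          (rawSA_mono (le_min le_rfl (hsIcc u hus).2) _ ((hAL u hus).2.2.1))
          (rawSA_mono (le_min le_rfl (hsIcc u hus).2) _ (hτ'eqmeas u hus))
      · have hEmpty : Λ' ∩ {ω | τ' ω = u} = ∅ := by
          ext ω
          simp only [mem_inter_iff, mem_setOf_eq, mem_empty_iff_false, iff_false, not_and]
          intro hω hτu
          obtain ⟨v, hv, _, hτv⟩ := mem_iUnion₂.1 hω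
          have hτv' : τ' ω = v := hτv
          rw [hτv'] at hτu
          rw [hτu] at hv
          exact hus hv
        rw [hEmpty]
        exact @MeasurableSet.empty _ (rawSA d (min u T))
  -- P₁, P₂ agree with P on the stopping σ-algebra of τ'
  have hAτ'raw : ∀ Aset : Set (PathSpace d), MeasurableSet[hτ'st.measurableSpace] Aset →
      ∀ u ∈ s, MeasurableSet[rawSA d u] (Aset ∩ {ω | τ' ω = u}) := by
    intro Aset hA u hu
    have h2 := ((hτ'st.measurableSet Aset).1 hA).2 u
    simp only [WithTop.coe_le_coe] at h2
    have heqm : min u T = u := min_eq_left (hsIcc u hu).2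
    have h3 : MeasurableSet[rawSA d u] (Aset ∩ {ω | τ' ω ≤ u}) := by
      have h2' : MeasurableSet[rawSA d (min u T)] (Aset ∩ {ω | τ' ω ≤ u}) := h2
      rw [heqm] at h2'
      exact h2'
    have h4 : Aset ∩ {ω | τ' ω = u} = (Aset ∩ {ω | τ' ω ≤ u}) ∩ {ω | τ' ω = u} := by
      ext ω
      constructor
      · rintro ⟨h5, h6⟩
        exact ⟨⟨h5, le_of_eq h6⟩, h6⟩
      · rintro ⟨⟨h5, _⟩, h6⟩
        exact ⟨h5, h6⟩
    rw [h4]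
    exact MeasurableSet.inter h3 (hτ'eqmeas u hu)
  have key_eq : ∀ R : @Measure (PathSpace d) m0,
      (∀ Aset, MeasurableSet[hτ.measurableSpace] Aset → R Aset = P Aset) →
      ∀ Aset, MeasurableSet[hτ'st.measurableSpace] Aset → R Aset = P Aset := by
    intro R hR Aset hA
    have hRD : R D = 0 := by rw [hR D hDmeas]; exact hDnull
    have hRne : R {ω | τ ω ≠ τ' ω} = 0 :=
      measure_mono_null Set.subset_union_left hRD
    have hpiece : ∀ u ∈ s, R (Aset ∩ {ω | τ' ω = u} ∩ {ω | τ ω = u})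
        = P (Aset ∩ {ω | τ' ω = u} ∩ {ω | τ ω = u}) := by
      intro u hu
      refine hR _ (mem_stopped_gen hτ (u := u) ?_ (fun ω hω => hω.2))
      show MeasurableSet[FhatSA T d 𝔓 u] (Aset ∩ {ω | τ' ω = u} ∩ {ω | τ ω = u})
      exact MeasurableSet.inter
        (rawSA_le_FhatSA' 𝔓 le_rfl (hsIcc u hu).2 _ (hAτ'raw Aset hA u hu)) (hτeq u hu)
    have hdec : ∀ μ : @Measure (PathSpace d) m0, μ {ω | τ ω ≠ τ' ω} = 0 →
        μ Aset = ∑ u ∈ s, μ (Aset ∩ {ω | τ' ω = u} ∩ {ω | τ ω = u}) := by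
      intro μ hμ
      have hcompl : μ {ω | τ ω = τ' ω}ᶜ = 0 := by
        have : {ω | τ ω = τ' ω}ᶜ = {ω | τ ω ≠ τ' ω} := rfl
        rw [this]
        exact hμ
      have h1 : μ Aset = μ (Aset ∩ {ω | τ ω = τ' ω}) :=
        (measure_inter_of_compl_null μ hcompl).symm
      rw [h1]
      have h2 : Aset ∩ {ω | τ ω = τ' ω}
          = ⋃ u ∈ s, (Aset ∩ {ω | τ' ω = u} ∩ {ω | τ ω = u}) := by
        ext ω
        constructor
        · rintro ⟨hA2, he⟩
          have he' : τ ω = τ' ω := he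
          exact mem_iUnion₂.2 ⟨τ ω, hmem ω, ⟨hA2, he'.symm⟩, rfl⟩
        · intro h
          obtain ⟨u, hu, ⟨hA2, h5⟩, h6⟩ := mem_iUnion₂.1 h
          have h5' : τ' ω = u := h5
          have h6' : τ ω = u := h6
          exact ⟨hA2, h6'.trans h5'.symm⟩
      rw [h2]
      refine measure_biUnion_finset ?_ ?_
      · intro u hu v hv huv
        refine Set.disjoint_left.2 fun ω hωu hωv => ?_
        exact huv ((hωu.2 : τ ω = u).symm.trans (hωv.2 : τ ω = v))
      · intro u hu
        exact MeasurableSet.inter (hB _ (rawSA_mono (hsIcc u hu).2 _ (hAτ'raw Aset hA u hu)))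
          ((FhatFilt T d 𝔓 hB hN).le u _ (hτeq u hu))
    rw [hdec R hRne, hdec P hNnull]
    exact Finset.sum_congr rfl hpiece
  have e₁ : EqOnSA hτ'st.measurableSpace P₁ P := key_eq P₁ hP₁.2
  have e₂ : EqOnSA hτ'st.measurableSpace P₂ P := key_eq P₂ hP₂.2
  -- apply stability under raw pasting
  obtain ⟨Q, hQ𝔓, hQint⟩ := hstable P hP τ' hτ'st hτ'fin hτ'mem Λ' hΛ'meas
    P₁ ⟨hP₁.1, e₁⟩ P₂ ⟨hP₂.1, e₂⟩
  refine ⟨Q, hQ𝔓, ?_⟩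
  intro h hmeas hbdd
  -- integrability
  have hmeas0 : Measurable[m0] h := hmeas.mono hB le_rfl
  have hint : ∀ R : @Measure (PathSpace d) m0, IsProbabilityMeasure R → Integrable h R := by
    intro R hR
    obtain ⟨C, hC⟩ := hbdd
    exact Integrable.mono' (integrable_const C) hmeas0.aestronglyMeasurable
      (Filter.Eventually.of_forall fun ω => by
        rw [Real.norm_eq_abs]; exact hC ω)
  -- σ-algebras below m0
  have hGhat_le : hτ.measurableSpace ≤ m0 := by
    intro Aset hA
    have h1 := ((hτ.measurableSet Aset).1 hA).2 T
    simp only [WithTop.coe_le_coe] at h1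
    have h2 : Aset ∩ {ω | τ ω ≤ T} = Aset :=
      Set.inter_eq_left.2 fun ω _ => (hτmem ω).2
    rw [h2] at h1
    exact (FhatFilt T d 𝔓 hB hN).le T _ h1
  have hG'_le : hτ'st.measurableSpace ≤ m0 := by
    intro Aset hA
    have h1 := ((hτ'st.measurableSet Aset).1 hA).2 T
    simp only [WithTop.coe_le_coe] at h1
    have h2 : Aset ∩ {ω | τ' ω ≤ T} = Aset :=
      Set.inter_eq_left.2 fun ω _ => (hτ'mem ω).2
    rw [h2] at h1
    have h3 : MeasurableSet[rawSA d (min T T)] Aset := h1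
    rw [min_self] at h3
    exact hB _ h3
  -- a.e. identifications of Λ and Λ'
  have hD1 : P₁ D = 0 := by rw [hP₁.2 D hDmeas]; exact hDnull
  have hD2 : P₂ D = 0 := by rw [hP₂.2 D hDmeas]; exact hDnull
  have hae₁ : Λ' =ᵐ[P₁] Λ := by
    rw [← measure_symmDiff_eq_zero_iff]
    exact measure_mono_null (by rw [symmDiff_comm]; exact hΛΛ'sub) hD1
  have hae₂ : (Λ'ᶜ : Set (PathSpace d)) =ᵐ[P₂] (Λᶜ : Set (PathSpace d)) := by
    rw [← measure_symmDiff_eq_zero_iff, compl_symmDiff_compl (a := Λ') (b := Λ)]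
    exact measure_mono_null (by rw [symmDiff_comm]; exact hΛΛ'sub) hD2
  -- integrable indicators
  have hIc1 := integrable_indicator_condexp' hG'_le P P₁ e₁ hΛ'meas h
  have hIc2 := integrable_indicator_condexp' hG'_le P P₂ e₂ (MeasurableSet.compl hΛ'meas) h
  have hIh1 := integrable_indicator_condexp' hGhat_le P P₁ hP₁.2 hΛ h
  have hIh2 := integrable_indicator_condexp' hGhat_le P P₂ hP₂.2 (MeasurableSet.compl hΛ) h
  calc ∫ x, h x ∂Q
      = ∫ x, (Λ'.indicator (condExp hτ'st.measurableSpace P₁ h) x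
          + Λ'ᶜ.indicator (condExp hτ'st.measurableSpace P₂ h) x) ∂P :=
        hQint h hmeas hbdd
    _ = ∫ x, Λ'.indicator (condExp hτ'st.measurableSpace P₁ h) x ∂P
          + ∫ x, Λ'ᶜ.indicator (condExp hτ'st.measurableSpace P₂ h) x ∂P :=
        integral_add hIc1 hIc2
    _ = ∫ x in Λ', h x ∂P₁ + ∫ x in Λ'ᶜ, h x ∂P₂ := by
        rw [integral_indicator_condexp' hG'_le P P₁ e₁ hΛ'meas (hint P₁ hP1p),
          integral_indicator_condexp' hG'_le P P₂ e₂ (MeasurableSet.compl hΛ'meas)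
            (hint P₂ hP2p)]
    _ = ∫ x in Λ, h x ∂P₁ + ∫ x in Λᶜ, h x ∂P₂ := by
        rw [setIntegral_congr_set hae₁, setIntegral_congr_set hae₂]
    _ = ∫ x, Λ.indicator (condExp hτ.measurableSpace P₁ h) x ∂P
          + ∫ x, Λᶜ.indicator (condExp hτ.measurableSpace P₂ h) x ∂P := by
        rw [integral_indicator_condexp' hGhat_le P P₁ hP₁.2 hΛ (hint P₁ hP1p),
          integral_indicator_condexp' hGhat_le P P₂ hP₂.2 (MeasurableSet.compl hΛ)
            (hint P₂ hP2p)]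
    _ = ∫ x, (Λ.indicator (condExp hτ.measurableSpace P₁ h) x
          + Λᶜ.indicator (condExp hτ.measurableSpace P₂ h) x) ∂P :=
        (integral_add hIh1 hIh2).symm
end

section
/- Let X ∈ L¹_𝒫 and let Y : [0,T]×Ω → ℝ be a process all of whose paths are càdlàg, adapted to F̂, such that for every t ∈ [0,T] and every P ∈ 𝒫, Y_t is a P-essential supremum of the family {E^{P'}[X|F̂_t] : P' ∈ 𝒫(F̂_t,P)}. Then: (a) (minimality) if S : [0,T]×Ω → ℝ is any process with all paths càdlàg, adapted to F̂, with S_T = X 𝒫-quasi-surely, such that S is an (F̂,P)-supermartingale for every P ∈ 𝒫, then outside a 𝒫-polar set one has S_t ≥ Y_t for all t ∈ [0,T]; (b) (uniqueness) if Y' is another process with all paths càdlàg, adapted to F̂, satisfying the same essential-supremum property, then outside a 𝒫-polar set Y'_t = Y_t for all t ∈ [0,T]. -/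
open MeasureTheory Set Filter

/-- Auxiliary: if two right-continuous (on `[0,T)`) processes satisfy `U t ≤ V t` `P`-a.s.
for every `t ∈ [0,T]` and every `P ∈ 𝔓`, then the inequality holds for all `t` simultaneously
outside a single polar set. -/
lemma helperRC {T : ℝ} (hT : 0 < T) {d : ℕ} {m0 : MeasurableSpace (PathSpace d)}
    (𝔓 : Set (@Measure (PathSpace d) m0))
    (U V : ℝ → PathSpace d → ℝ)
    (hU : ∀ ω, IsCadlagPath T (fun t => U t ω))
    (hV : ∀ ω, IsCadlagPath T (fun t => V t ω))
    (h : ∀ t ∈ Set.Icc (0 : ℝ) T, ∀ P ∈ 𝔓, U t ≤ᵐ[P] V t) :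
    ∃ N : Set (PathSpace d), IsPolar 𝔓 N ∧
      ∀ ω ∉ N, ∀ t ∈ Set.Icc (0 : ℝ) T, U t ω ≤ V t ω := by
  refine ⟨{ω | ¬ U T ω ≤ V T ω} ∪
      ⋃ q : ℚ, {ω | (q : ℝ) ∈ Set.Icc (0 : ℝ) T ∧ ¬ U q ω ≤ V q ω}, ?_, ?_⟩
  · intro P hP
    refine measure_union_null (ae_iff.mp (h T ⟨hT.le, le_rfl⟩ P hP))
      (measure_iUnion_null fun q => ?_)
    by_cases hq : (q : ℝ) ∈ Set.Icc (0 : ℝ) T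
    · exact measure_mono_null (fun ω hω => hω.2) (ae_iff.mp (h q hq P hP))
    · exact measure_mono_null (fun ω hω => absurd hω.1 hq) measure_empty
  · intro ω hω t ht
    simp only [Set.mem_union, Set.mem_iUnion, Set.mem_setOf_eq, not_or, not_exists, not_and,
      not_not] at hω
    obtain ⟨hωT, hωq⟩ := hω
    rcases eq_or_lt_of_le ht.2 with rfl | htT
    · exact hωT
    · -- approximate from the right by rationals
      have hq : ∀ n : ℕ, ∃ q : ℚ, t < (q : ℝ) ∧ (q : ℝ) < min (t + 1 / (n + 1)) T := by
        intro n
        refine exists_rat_btwn (lt_min ?_ htT)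
        have : (0 : ℝ) < 1 / (n + 1) := by positivity
        linarith
      choose q hq1 hq2 using hq
      have hqIcc : ∀ n, ((q n : ℝ)) ∈ Set.Icc (0 : ℝ) T := fun n =>
        ⟨ht.1.trans (hq1 n).le, ((hq2 n).trans_le (min_le_right _ _)).le⟩
      have hle : ∀ n, U (q n) ω ≤ V (q n) ω := fun n => hωq (q n) (hqIcc n)
      have htend0 : Tendsto (fun n : ℕ => ((q n : ℝ))) atTop (nhds t) := by
        have h2 : Tendsto (fun n : ℕ => t + 1 / ((n : ℝ) + 1)) atTop (nhds (t + 0)) :=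
          tendsto_const_nhds.add tendsto_one_div_add_atTop_nhds_zero_nat
        rw [add_zero] at h2
        exact tendsto_of_tendsto_of_tendsto_of_le_of_le tendsto_const_nhds h2
          (fun n => (hq1 n).le) (fun n => ((hq2 n).trans_le (min_le_left _ _)).le)
      have htend : Tendsto (fun n : ℕ => ((q n : ℝ))) atTop (nhdsWithin t (Set.Ioi t)) :=
        tendsto_nhdsWithin_of_tendsto_nhds_of_eventually_within _ htend0
          (Eventually.of_forall fun n => hq1 n)
      have hUt : Tendsto (fun n => U (q n) ω) atTop (nhds (U t ω)) :=
        ((hU ω).1 t ⟨ht.1, htT⟩).comp htend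
      have hVt : Tendsto (fun n => V (q n) ω) atTop (nhds (V t ω)) :=
        ((hV ω).1 t ⟨ht.1, htT⟩).comp htend
      exact le_of_tendsto_of_tendsto' hUt hVt hle

/-- minimality and uniqueness of the càdlàg `E`-martingale. -/
theorem statement8 {T : ℝ} (hT : 0 < T) {d : ℕ}
    {m0 : MeasurableSpace (PathSpace d)}
    (𝔓 : Set (@Measure (PathSpace d) m0)) (h𝔓 : 𝔓.Nonempty)
    (hprob : ∀ P ∈ 𝔓, IsProbabilityMeasure P)
    (hB : rawSA d T ≤ m0)
    (hN : MeasurableSpace.generateFrom {N | IsPolar 𝔓 N} ≤ m0)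
    (X : PathSpace d → ℝ) (hX : MemL1 (rawSA d T) 𝔓 X)
    -- `Y` : càdlàg, `F̂`-adapted, essential-supremum property at every `t ∈ [0,T]`
    (Y : ℝ → PathSpace d → ℝ)
    (hYpath : ∀ ω, IsCadlagPath T (fun t => Y t ω))
    (hYadp : ∀ t ∈ Set.Icc (0 : ℝ) T, Measurable[FhatSA T d 𝔓 t] (Y t))
    (hYess : ∀ t ∈ Set.Icc (0 : ℝ) T, ∀ P ∈ 𝔓,
      IsEssSupOf P (condExpFam 𝔓 (FhatSA T d 𝔓 t) P X) (Y t)) :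
    -- (a) minimality among càdlàg `(F̂,𝔓)`-supermartingales with terminal value `X`
    (∀ S : ℝ → PathSpace d → ℝ,
      (∀ ω, IsCadlagPath T (fun t => S t ω)) →
      (∀ t ∈ Set.Icc (0 : ℝ) T, Measurable[FhatSA T d 𝔓 t] (S t)) →
      IsPolar 𝔓 {ω | S T ω ≠ X ω} →
      (∀ P ∈ 𝔓, ∀ s t : ℝ, 0 ≤ s → s ≤ t → t ≤ T →
        Integrable (S t) P ∧ condExp (FhatSA T d 𝔓 s) P (S t) ≤ᵐ[P] S s) →
      ∃ N : Set (PathSpace d), IsPolar 𝔓 N ∧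
        ∀ ω ∉ N, ∀ t ∈ Set.Icc (0 : ℝ) T, Y t ω ≤ S t ω) ∧
    -- (b) uniqueness up to a polar set
    (∀ Y' : ℝ → PathSpace d → ℝ,
      (∀ ω, IsCadlagPath T (fun t => Y' t ω)) →
      (∀ t ∈ Set.Icc (0 : ℝ) T, Measurable[FhatSA T d 𝔓 t] (Y' t)) →
      (∀ t ∈ Set.Icc (0 : ℝ) T, ∀ P ∈ 𝔓,
        IsEssSupOf P (condExpFam 𝔓 (FhatSA T d 𝔓 t) P X) (Y' t)) →
      ∃ N : Set (PathSpace d), IsPolar 𝔓 N ∧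
        ∀ ω ∉ N, ∀ t ∈ Set.Icc (0 : ℝ) T, Y' t ω = Y t ω) := by
  constructor
  · -- (a) minimality
    intro S hSpath hSadp hST hSmart
    refine helperRC hT 𝔓 Y S hYpath hSpath ?_
    intro t ht P hP
    refine (hYess t ht P hP).2 (S t) ?_
    rintro f ⟨Q, ⟨hQ𝔓, hQeq⟩, rfl⟩
    set G := FhatSA T d 𝔓 t with hG
    -- supermartingale property under Q
    obtain ⟨hSint, hSle⟩ := hSmart Q hQ𝔓 t T ht.1 ht.2 le_rfl
    -- S T = X Q-a.s.
    have hSTX : S T =ᵐ[Q] X := by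
      rw [Filter.EventuallyEq, ae_iff]
      exact hST Q hQ𝔓
    have hcongr : condExp G Q X =ᵐ[Q] condExp G Q (S T) := condExp_congr_ae hSTX.symm
    have hQae : condExp G Q X ≤ᵐ[Q] S t := hcongr.trans_le hSle
    -- the bad set is G-measurable, hence P-null since Q = P on G
    have hA : MeasurableSet[G] {ω | S t ω < condExp G Q X ω} :=
      @measurableSet_lt _ _ _ _ _ G _ _ _ _ _ (hSadp t ht)
        (stronglyMeasurable_condExp.measurable)
    have hQA : Q {ω | S t ω < condExp G Q X ω} = 0 := by
      have := ae_iff.mp hQae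
      simpa only [not_le] using this
    have hPA : P {ω | S t ω < condExp G Q X ω} = 0 := by
      rw [← hQeq _ hA]; exact hQA
    rw [Filter.EventuallyLE, ae_iff]
    simpa only [not_le] using hPA
  · -- (b) uniqueness
    intro Y' hY'path hY'adp hY'ess
    obtain ⟨N₁, hN₁, hN₁le⟩ := helperRC hT 𝔓 Y' Y hY'path hYpath
      (fun t ht P hP => (hY'ess t ht P hP).2 (Y t) (fun f hf => (hYess t ht P hP).1 f hf))
    obtain ⟨N₂, hN₂, hN₂le⟩ := helperRC hT 𝔓 Y Y' hYpath hY'path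
      (fun t ht P hP => (hYess t ht P hP).2 (Y' t) (fun f hf => (hY'ess t ht P hP).1 f hf))
    refine ⟨N₁ ∪ N₂, fun P hP => measure_union_null (hN₁ P hP) (hN₂ P hP), ?_⟩
    intro ω hω t ht
    have hω₁ : ω ∉ N₁ := fun h => hω (Set.mem_union_left _ h)
    have hω₂ : ω ∉ N₂ := fun h => hω (Set.mem_union_right _ h)
    exact le_antisymm (hN₁le ω hω₁ t ht) (hN₂le ω hω₂ t ht)
end

section
/- Let p ∈ (1,∞) and let X be F°_T-measurable with sup_{P∈𝒫} E^P[|X|^p] < ∞. Let Y and W be processes on [0,T]×Ω, all paths càdlàg, adapted to F̂, such that for every F̂-stopping time σ with values in [0,T] and every P ∈ 𝒫: Y_σ is a P-essential supremum of {E^{P'}[X|F̂_σ] : P' ∈ 𝒫(F̂_σ,P)} and there is a sequence (Pₙ) in 𝒫(F̂_σ,P) with E^{Pₙ}[X|F̂_σ] P-a.s. nondecreasing and converging P-a.s. to Y_σ; and likewise W_σ is a P-essential supremum of {E^{P'}[|X|^p|F̂_σ] : P' ∈ 𝒫(F̂_σ,P)} attained as a P-a.s. nondecreasing limit along some sequence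 in 𝒫(F̂_σ,P). Then for every F̂-stopping time σ and every P ∈ 𝒫, E^P[|Y_σ|^p] ≤ sup_{P'∈𝒫} E^{P'}[|X|^p]; in particular, the family {Y_σ : σ an F̂-stopping time} is uniformly integrable under every P ∈ 𝒫, i.e., Y is of class (D,𝒫). -/
open MeasureTheory Set Filter

section Aux
open Real

lemma tangent_aux {p : ℝ} (hp : 1 < p) (s t : ℝ) (hs : 0 ≤ s) :
    |s| ^ p + p * |s| ^ (p - 2) * s * (t - s) ≤ |t| ^ p := by
  rcases eq_or_lt_of_le hs with rfl | hs
  · simp [Real.zero_rpow (by positivity : p ≠ 0)]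
    positivity
  · rw [abs_of_pos hs]
    have hsp : (0:ℝ) < s ^ p := Real.rpow_pos_of_pos hs p
    have hs1 : (0:ℝ) < s ^ (p-1) := Real.rpow_pos_of_pos hs _
    have e1 : s ^ (p-2) * s = s ^ (p-1) := by
      have := Real.rpow_add hs (p-2) 1
      rw [Real.rpow_one, show p-2+1 = p-1 by ring] at this
      rw [← this]
    have e2 : s ^ (p-1) * s = s ^ p := by
      have := Real.rpow_add hs (p-1) 1
      rw [Real.rpow_one, show p-1+1 = p by ring] at this
      rw [← this]
    rw [mul_assoc p (s^(p-2)) s, e1]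
    rcases le_or_gt t 0 with ht | ht
    · have h0 : (0:ℝ) ≤ |t| ^ p := Real.rpow_nonneg (abs_nonneg t) p
      nlinarith [mul_nonneg (mul_pos (by linarith : (0:ℝ) < p) hs1).le (neg_nonneg.mpr ht)]
    · rw [abs_of_pos ht]
      have hb := one_add_mul_self_le_rpow_one_add (show (-1:ℝ) ≤ t/s - 1 by
        have := div_pos ht hs; linarith) hp.le
      rw [add_sub_cancel] at hb
      rw [Real.div_rpow ht.le hs.le] at hb
      have h2 := mul_le_mul_of_nonneg_left hb hsp.le
      have hsn : s ≠ 0 := ne_of_gt hs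
      have e3 : s ^ p * (t ^ p / s ^ p) = t ^ p := by field_simp
      have e5 : s ^ p * (t / s) = s ^ (p-1) * t := by
        rw [← e2]; field_simp
      nlinarith [h2, e3, e5, e2]

lemma tangent {p : ℝ} (hp : 1 < p) (s t : ℝ) :
    |s| ^ p + p * |s| ^ (p - 2) * s * (t - s) ≤ |t| ^ p := by
  rcases le_or_gt 0 s with hs | hs
  · exact tangent_aux hp s t hs
  · have h := tangent_aux hp (-s) (-t) (by linarith)
    rw [abs_neg, abs_neg] at h
    nlinarith [h]

lemma tendsto_tangent {p : ℝ} (hp : 1 < p) (t : ℝ) :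
    Tendsto (fun s : ℝ => |s| ^ p + p * |s| ^ (p - 2) * s * (t - s)) (nhds t)
      (nhds (|t| ^ p)) := by
  have hp0 : (0:ℝ) ≤ p := by linarith
  have habs : ∀ x : ℝ, ContinuousAt (fun s : ℝ => |s| ^ p) x := fun x =>
    (Real.continuousAt_rpow_const |x| p (Or.inr hp0)).comp continuous_abs.continuousAt
  rcases eq_or_ne t 0 with rfl | ht
  · have heq : ∀ s : ℝ, |s| ^ p + p * |s| ^ (p - 2) * s * ((0:ℝ) - s)
        = (1 - p) * |s| ^ p := by
      intro s
      rcases eq_or_ne s 0 with rfl | hs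
      · simp [Real.zero_rpow (by positivity : p ≠ 0)]
      · have habs0 : (0:ℝ) < |s| := abs_pos.mpr hs
        have e2 : |s| ^ (p-2) * s^2 = |s| ^ p := by
          rw [show s^2 = |s|^(2:ℕ) by rw [sq_abs], ← Real.rpow_natCast |s| 2,
            ← Real.rpow_add habs0]
          norm_num
        rw [show |s| ^ p + p * |s| ^ (p-2) * s * ((0:ℝ) - s)
          = |s| ^ p - p * (|s| ^ (p-2) * s^2) by ring, e2]; ring
    simp only [heq]
    have : ContinuousAt (fun s : ℝ => (1 - p) * |s| ^ p) 0 :=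
      continuousAt_const.mul (habs 0)
    simpa [Real.zero_rpow (by positivity : p ≠ 0)] using this.tendsto
  · have habs2 : ContinuousAt (fun s : ℝ => |s| ^ (p - 2)) t :=
      (Real.continuousAt_rpow_const |t| (p-2) (Or.inl (abs_ne_zero.mpr ht))).comp
        continuous_abs.continuousAt
    have hc : ContinuousAt (fun s : ℝ => |s| ^ p + p * |s| ^ (p - 2) * s * (t - s)) t :=
      (habs t).add (((continuousAt_const.mul habs2).mul continuousAt_id).mul
        (continuousAt_const.sub continuousAt_id))
    simpa using hc.tendsto

lemma sup_tangent {p : ℝ} (hp : 1 < p) (t c : ℝ)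
    (h : ∀ q : ℚ, |(q:ℝ)| ^ p + p * |(q:ℝ)| ^ (p - 2) * (q:ℝ) * (t - (q:ℝ)) ≤ c) :
    |t| ^ p ≤ c := by
  have hd : t ∈ closure (Set.range ((↑) : ℚ → ℝ)) := Rat.denseRange_cast t
  haveI hne : (nhdsWithin t (Set.range ((↑) : ℚ → ℝ))).NeBot :=
    mem_closure_iff_nhdsWithin_neBot.mp hd
  refine le_of_tendsto (x := nhdsWithin t (Set.range ((↑) : ℚ → ℝ)))
    (f := fun s : ℝ => |s| ^ p + p * |s| ^ (p - 2) * s * (t - s))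
    ((tendsto_tangent hp t).mono_left nhdsWithin_le_nhds) ?_
  filter_upwards [self_mem_nhdsWithin] with s hs
  obtain ⟨q, rfl⟩ := hs
  exact h q

lemma ae_le_transfer {α : Type*} {m0 : MeasurableSpace α} {G : MeasurableSpace α}
    (hG : G ≤ m0) {Q P : @Measure α m0} (hQP : ∀ A, MeasurableSet[G] A → Q A = P A)
    {f g : α → ℝ} (hf : Measurable[G] f) (hg : Measurable[G] g)
    (h : f ≤ᵐ[Q] g) : f ≤ᵐ[P] g := by
  have hs : MeasurableSet[G] {x | ¬ f x ≤ g x} := by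
    simpa only [not_le] using (measurableSet_lt (α := ℝ) hg hf)
  have h0 : Q {x | ¬ f x ≤ g x} = 0 := ae_iff.mp h
  exact ae_iff.mpr ((hQP _ hs) ▸ h0)

lemma condexp_jensen_rpow {α : Type*} {m0 : MeasurableSpace α} {G : MeasurableSpace α}
    (hG : G ≤ m0) (Q : @Measure α m0) [IsProbabilityMeasure Q] {p : ℝ} (hp : 1 < p)
    {X : α → ℝ} (hXi : Integrable X Q) (hXpi : Integrable (fun ω => |X ω| ^ p) Q) :
    ∀ᵐ ω ∂Q, |condExp G Q X ω| ^ p ≤ condExp G Q (fun ω => |X ω| ^ p) ω := by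
  haveI : SigmaFinite (Q.trim hG) := by
    haveI : IsFiniteMeasure (Q.trim hG) := isFiniteMeasure_trim hG
    infer_instance
  have hq : ∀ q : ℚ, ∀ᵐ ω ∂Q,
      |(q:ℝ)| ^ p + (p * |(q:ℝ)| ^ (p - 2) * (q:ℝ)) * (condExp G Q X ω - (q:ℝ))
        ≤ condExp G Q (fun ω => |X ω| ^ p) ω := by
    intro q
    set a : ℝ := p * |(q:ℝ)| ^ (p - 2) * (q:ℝ) with ha
    set b : ℝ := |(q:ℝ)| ^ p - a * (q:ℝ) with hb
    have hint : Integrable (fun ω => a * X ω + b) Q :=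
      (hXi.const_mul a).add (integrable_const b)
    have h1 : condExp G Q (fun ω => a * X ω + b)
        ≤ᵐ[Q] condExp G Q (fun ω => |X ω| ^ p) := by
      refine condExp_mono hint hXpi (ae_of_all _ fun ω => ?_)
      have := tangent hp (q:ℝ) (X ω)
      simp only [ha, hb]; nlinarith [this]
    have h2 : condExp G Q (fun ω => a * X ω + b)
        =ᵐ[Q] fun ω => a * condExp G Q X ω + b := by
      have hadd := condExp_add (m := G) (μ := Q) (hXi.const_mul a) (integrable_const b)
      have hsmul : condExp G Q (fun ω => a * X ω) =ᵐ[Q] fun ω => a * condExp G Q X ω := by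
        have := condExp_smul (m := G) (μ := Q) a X
        exact this
      have hconst : condExp G Q (fun _ : α => b) = fun _ => b := condExp_const hG b
      filter_upwards [hadd, hsmul] with ω hω1 hω2
      have : condExp G Q (fun ω => a * X ω + b) ω
          = condExp G Q (fun ω => a * X ω) ω + condExp G Q (fun _ => b) ω := hω1
      rw [this, hconst, hω2]
    filter_upwards [h1, h2] with ω hω1 hω2
    have : a * condExp G Q X ω + b ≤ condExp G Q (fun ω => |X ω| ^ p) ω := by
      rw [← hω2]; exact hω1
    simp only [hb] at this; nlinarith [this]
  rw [← ae_all_iff] at hq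
  filter_upwards [hq] with ω hω
  refine sup_tangent hp _ _ fun q => ?_
  have := hω q
  nlinarith [this]

lemma abs_le_one_add_rpow {p : ℝ} (hp : 1 < p) (y : ℝ) : |y| ≤ 1 + |y| ^ p := by
  rcases le_or_gt (|y|) 1 with h | h
  · have := Real.rpow_nonneg (abs_nonneg y) p
    linarith
  · have h2 : |y| ^ (1:ℝ) ≤ |y| ^ p :=
      Real.rpow_le_rpow_of_exponent_le h.le hp.le
    rw [Real.rpow_one] at h2
    have : (0:ℝ) ≤ 1 := zero_le_one
    linarith

lemma key_bound {α : Type*} {m0 : MeasurableSpace α} {G : MeasurableSpace α} (hG : G ≤ m0)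
    (𝔓 : Set (@MeasureTheory.Measure α m0)) (hprob : ∀ P ∈ 𝔓, IsProbabilityMeasure P)
    {P : @MeasureTheory.Measure α m0} (hP : P ∈ 𝔓) [IsProbabilityMeasure P]
    {p : ℝ} (hp : 1 < p) {X : α → ℝ} (hXm : Measurable[m0] X)
    (hXpi : ∀ Q ∈ 𝔓, Integrable (fun ω => |X ω| ^ p) Q)
    {M : ℝ} (hM : ∀ Q ∈ 𝔓, ∫ ω, |X ω| ^ p ∂Q ≤ M)
    {Yσ Wσ : α → ℝ}
    (hessW : ∀ Q, Q ∈ 𝔓 → (∀ A, MeasurableSet[G] A → Q A = P A) →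
      condExp G Q (fun ω => |X ω| ^ p) ≤ᵐ[P] Wσ)
    (Pn : ℕ → @MeasureTheory.Measure α m0)
    (hPn : ∀ n, Pn n ∈ 𝔓 ∧ ∀ A, MeasurableSet[G] A → Pn n A = P A)
    (htend : ∀ᵐ ω ∂P, Tendsto (fun n => condExp G (Pn n) X ω) atTop (nhds (Yσ ω)))
    (Qn : ℕ → @MeasureTheory.Measure α m0)
    (hQn : ∀ n, Qn n ∈ 𝔓 ∧ ∀ A, MeasurableSet[G] A → Qn n A = P A)
    (hWtend : ∀ᵐ ω ∂P, Tendsto (fun n => condExp G (Qn n) (fun ω' => |X ω'| ^ p) ω)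
      atTop (nhds (Wσ ω))) :
    AEMeasurable Yσ P ∧ ∫⁻ ω, ENNReal.ofReal (|Yσ ω| ^ p) ∂P ≤ ENNReal.ofReal M := by
  have hp0 : (0:ℝ) ≤ p := by linarith
  have hcont : Continuous fun x : ℝ => |x| ^ p :=
    continuous_abs.rpow_const fun _ => Or.inr hp0
  have hgm : ∀ n, Measurable[G] (condExp G (Pn n) X) := fun n =>
    stronglyMeasurable_condExp.measurable
  have hYae : AEMeasurable Yσ P :=
    @aemeasurable_of_tendsto_metrizable_ae α ℝ m0 _ _ _ _ ℕ P _ Yσ atTop _ _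
      (fun n => ((hgm n).mono hG le_rfl).aemeasurable) htend
  -- Jensen and ess sup: |condExp X|^p ≤ Wσ a.e.
  have hgW : ∀ n, (fun ω => |condExp G (Pn n) X ω| ^ p) ≤ᵐ[P] Wσ := by
    intro n
    obtain ⟨hPn𝔓, hPnP⟩ := hPn n
    haveI := hprob _ hPn𝔓
    have hXi : Integrable X (Pn n) := by
      refine ((integrable_const (1:ℝ)).add (hXpi _ hPn𝔓)).mono'
        hXm.aestronglyMeasurable (ae_of_all _ fun ω => ?_)
      have h1 := abs_le_one_add_rpow hp (X ω)
      have h2 : (0:ℝ) ≤ |X ω| ^ p := Real.rpow_nonneg (abs_nonneg _) p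
      calc ‖X ω‖ = |X ω| := rfl
        _ ≤ 1 + |X ω| ^ p := h1
    have hj := condexp_jensen_rpow hG (Pn n) hp hXi (hXpi _ hPn𝔓)
    have hj' : (fun ω => |condExp G (Pn n) X ω| ^ p)
        ≤ᵐ[P] condExp G (Pn n) (fun ω => |X ω| ^ p) :=
      ae_le_transfer hG hPnP (hcont.measurable.comp (hgm n))
        stronglyMeasurable_condExp.measurable hj
    exact hj'.trans (hessW _ hPn𝔓 hPnP)
  have hYW : (fun ω => |Yσ ω| ^ p) ≤ᵐ[P] Wσ := by
    have hall : ∀ᵐ ω ∂P, ∀ n, |condExp G (Pn n) X ω| ^ p ≤ Wσ ω := ae_all_iff.mpr hgW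
    filter_upwards [hall, htend] with ω h1 h2
    have hlim : Tendsto (fun n => |condExp G (Pn n) X ω| ^ p) atTop
        (nhds (|Yσ ω| ^ p)) := (hcont.tendsto _).comp h2
    exact le_of_tendsto hlim (Eventually.of_forall h1)
  -- bound the lintegral of Wσ
  have hWk : ∀ k, ∫⁻ ω, ENNReal.ofReal (condExp G (Qn k) (fun ω' => |X ω'| ^ p) ω) ∂P
      ≤ ENNReal.ofReal M := by
    intro k
    obtain ⟨hQ𝔓, hQP⟩ := hQn k
    haveI := hprob _ hQ𝔓
    haveI : SigmaFinite ((Qn k).trim hG) := by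
      haveI : IsFiniteMeasure ((Qn k).trim hG) := isFiniteMeasure_trim hG
      infer_instance
    have hm : Measurable[G] fun ω =>
        ENNReal.ofReal (condExp G (Qn k) (fun ω' => |X ω'| ^ p) ω) :=
      ENNReal.measurable_ofReal.comp stronglyMeasurable_condExp.measurable
    have htrim : P.trim hG = (Qn k).trim hG := by
      refine MeasureTheory.Measure.ext fun A hA => ?_
      rw [trim_measurableSet_eq hG hA, trim_measurableSet_eq hG hA, hQP A hA]
    calc ∫⁻ ω, ENNReal.ofReal (condExp G (Qn k) (fun ω' => |X ω'| ^ p) ω) ∂P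
        = ∫⁻ ω, ENNReal.ofReal (condExp G (Qn k) (fun ω' => |X ω'| ^ p) ω) ∂(P.trim hG) :=
          (lintegral_trim hG hm).symm
      _ = ∫⁻ ω, ENNReal.ofReal (condExp G (Qn k) (fun ω' => |X ω'| ^ p) ω)
            ∂((Qn k).trim hG) := by rw [htrim]
      _ = ∫⁻ ω, ENNReal.ofReal (condExp G (Qn k) (fun ω' => |X ω'| ^ p) ω) ∂(Qn k) :=
          lintegral_trim hG hm
      _ = ENNReal.ofReal (∫ ω, condExp G (Qn k) (fun ω' => |X ω'| ^ p) ω ∂(Qn k)) :=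
          (ofReal_integral_eq_lintegral_ofReal integrable_condExp
            (condExp_nonneg (ae_of_all _ fun ω => Real.rpow_nonneg (abs_nonneg _) p))).symm
      _ = ENNReal.ofReal (∫ ω, |X ω| ^ p ∂(Qn k)) := by rw [integral_condExp hG]
      _ ≤ ENNReal.ofReal M := ENNReal.ofReal_le_ofReal (hM _ hQ𝔓)
  have hWbound : ∫⁻ ω, ENNReal.ofReal (Wσ ω) ∂P ≤ ENNReal.ofReal M := by
    have hmeas : ∀ k, Measurable[m0] fun ω =>
        ENNReal.ofReal (condExp G (Qn k) (fun ω' => |X ω'| ^ p) ω) := fun k =>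
      ENNReal.measurable_ofReal.comp (stronglyMeasurable_condExp.measurable.mono hG le_rfl)
    have hcongr : (fun ω => ENNReal.ofReal (Wσ ω)) =ᵐ[P] fun ω =>
        liminf (fun k => ENNReal.ofReal (condExp G (Qn k) (fun ω' => |X ω'| ^ p) ω))
          atTop := by
      filter_upwards [hWtend] with ω hω
      exact ((ENNReal.tendsto_ofReal hω).liminf_eq).symm
    calc ∫⁻ ω, ENNReal.ofReal (Wσ ω) ∂P
        = ∫⁻ ω, liminf (fun k =>
            ENNReal.ofReal (condExp G (Qn k) (fun ω' => |X ω'| ^ p) ω)) atTop ∂P :=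
          lintegral_congr_ae hcongr
      _ ≤ liminf (fun k => ∫⁻ ω,
            ENNReal.ofReal (condExp G (Qn k) (fun ω' => |X ω'| ^ p) ω) ∂P) atTop :=
          lintegral_liminf_le hmeas
      _ ≤ liminf (fun _ : ℕ => ENNReal.ofReal M) atTop :=
          liminf_le_liminf (Eventually.of_forall hWk)
      _ = ENNReal.ofReal M := liminf_const _
  refine ⟨hYae, le_trans ?_ hWbound⟩
  exact lintegral_mono_ae (hYW.mono fun ω h => ENNReal.ofReal_le_ofReal h)

end Aux

/-- if `X` has a uniformly bounded `p`-th moment (`p > 1`), the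
`E`-martingale is of class (D,`𝔓`): the stopped values have `p`-th moments bounded by
`sup_{P'} E^{P'}[|X|^p]`, and they are uniformly integrable under every `P ∈ 𝔓`. -/
theorem statement11 {T : ℝ} (hT : 0 < T) {d : ℕ}
    {m0 : MeasurableSpace (PathSpace d)}
    (𝔓 : Set (@Measure (PathSpace d) m0)) (h𝔓 : 𝔓.Nonempty)
    (hprob : ∀ P ∈ 𝔓, IsProbabilityMeasure P)
    (hB : rawSA d T ≤ m0)
    (hN : MeasurableSpace.generateFrom {N | IsPolar 𝔓 N} ≤ m0)
    (p : ℝ) (hp : 1 < p)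
    (X : PathSpace d → ℝ) (hXmeas : Measurable[rawSA d T] X)
    (hXp : (∀ P ∈ 𝔓, Integrable (fun ω => |X ω| ^ p) P) ∧
      ∃ M : ℝ, ∀ P ∈ 𝔓, ∫ ω, |X ω| ^ p ∂P ≤ M)
    (Y W : ℝ → PathSpace d → ℝ)
    -- `Y_σ` represents the conditional sublinear expectation of `X` at every stopping time,
    -- attained along an increasing sequence
    (hY : ∀ σ : PathSpace d → ℝ, ∀ hσ : IsStoppingTime (FhatFilt T d 𝔓 hB hN) (fun ω => (σ ω : WithTop ℝ)),
      (∀ ω, σ ω ∈ Set.Icc (0 : ℝ) T) → ∀ P ∈ 𝔓,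
      IsEssSupOf P (condExpFam 𝔓 hσ.measurableSpace P X) (fun ω => Y (σ ω) ω) ∧
      ∃ Pn : ℕ → @Measure (PathSpace d) m0,
        (∀ n, Pn n ∈ MSet 𝔓 hσ.measurableSpace P) ∧
        (∀ᵐ ω ∂P, Monotone fun n => condExp hσ.measurableSpace (Pn n) X ω) ∧
        (∀ᵐ ω ∂P, Tendsto (fun n => condExp hσ.measurableSpace (Pn n) X ω)
          atTop (nhds (Y (σ ω) ω))))
    -- likewise `W_σ` for the claim `|X|^p`
    (hW : ∀ σ : PathSpace d → ℝ, ∀ hσ : IsStoppingTime (FhatFilt T d 𝔓 hB hN) (fun ω => (σ ω : WithTop ℝ)),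
      (∀ ω, σ ω ∈ Set.Icc (0 : ℝ) T) → ∀ P ∈ 𝔓,
      IsEssSupOf P (condExpFam 𝔓 hσ.measurableSpace P (fun ω => |X ω| ^ p))
        (fun ω => W (σ ω) ω) ∧
      ∃ Pn : ℕ → @Measure (PathSpace d) m0,
        (∀ n, Pn n ∈ MSet 𝔓 hσ.measurableSpace P) ∧
        (∀ᵐ ω ∂P, Monotone fun n =>
          condExp hσ.measurableSpace (Pn n) (fun ω' => |X ω'| ^ p) ω) ∧
        (∀ᵐ ω ∂P, Tendsto (fun n =>
          condExp hσ.measurableSpace (Pn n) (fun ω' => |X ω'| ^ p) ω)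
          atTop (nhds (W (σ ω) ω)))) :
    -- the `p`-th moment bound for the stopped values
    (∀ σ : PathSpace d → ℝ, IsStoppingTime (FhatFilt T d 𝔓 hB hN) (fun ω => (σ ω : WithTop ℝ)) →
      (∀ ω, σ ω ∈ Set.Icc (0 : ℝ) T) → ∀ P ∈ 𝔓,
      Integrable (fun ω => |Y (σ ω) ω| ^ p) P ∧
      ∀ M : ℝ, (∀ P' ∈ 𝔓, ∫ ω, |X ω| ^ p ∂P' ≤ M) →
        ∫ ω, |Y (σ ω) ω| ^ p ∂P ≤ M) ∧
    -- in particular, `Y` is of class (D,`𝔓`): uniform integrability of the stopped values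
    (∀ P ∈ 𝔓, ∀ ε : ℝ, 0 < ε → ∃ K : ℝ,
      ∀ σ : PathSpace d → ℝ, IsStoppingTime (FhatFilt T d 𝔓 hB hN) (fun ω => (σ ω : WithTop ℝ)) →
      (∀ ω, σ ω ∈ Set.Icc (0 : ℝ) T) →
      ∫ ω in {ω | K ≤ |Y (σ ω) ω|}, |Y (σ ω) ω| ∂P ≤ ε) := by
  classical
  have hp0 : (0:ℝ) ≤ p := by linarith
  have hcont : Continuous fun x : ℝ => |x| ^ p :=
    continuous_abs.rpow_const fun _ => Or.inr hp0
  have main : ∀ σ : PathSpace d → ℝ,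
      ∀ hσ : IsStoppingTime (FhatFilt T d 𝔓 hB hN) (fun ω => (σ ω : WithTop ℝ)),
      (∀ ω, σ ω ∈ Set.Icc (0:ℝ) T) → ∀ P, P ∈ 𝔓 →
      AEMeasurable (fun ω => Y (σ ω) ω) P ∧
      Integrable (fun ω => |Y (σ ω) ω| ^ p) P ∧
      ∀ M : ℝ, (∀ P' ∈ 𝔓, ∫ ω, |X ω| ^ p ∂P' ≤ M) →
        ∫ ω, |Y (σ ω) ω| ^ p ∂P ≤ M := by
    intro σ hσ hσT P hP
    haveI := hprob P hP
    have hG : hσ.measurableSpace ≤ m0 := hσ.measurableSpace_le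
    obtain ⟨essY, Pn, hPnmem, _, htend⟩ := hY σ hσ hσT P hP
    obtain ⟨essW, Qn, hQnmem, _, hWtend⟩ := hW σ hσ hσT P hP
    have hessW : ∀ Q, Q ∈ 𝔓 → (∀ A, MeasurableSet[hσ.measurableSpace] A → Q A = P A) →
        condExp hσ.measurableSpace Q (fun ω => |X ω| ^ p) ≤ᵐ[P] fun ω => W (σ ω) ω :=
      fun Q hQ hQP => essW.1 _ ⟨Q, ⟨hQ, hQP⟩, rfl⟩
    have hkey : ∀ M : ℝ, (∀ P' ∈ 𝔓, ∫ ω, |X ω| ^ p ∂P' ≤ M) →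
        AEMeasurable (fun ω => Y (σ ω) ω) P ∧
        ∫⁻ ω, ENNReal.ofReal (|Y (σ ω) ω| ^ p) ∂P ≤ ENNReal.ofReal M := by
      intro M hM
      exact key_bound hG 𝔓 hprob hP hp (hXmeas.mono hB le_rfl) hXp.1 hM hessW
        Pn (fun n => ⟨(hPnmem n).1, (hPnmem n).2⟩) htend
        Qn (fun n => ⟨(hQnmem n).1, (hQnmem n).2⟩) hWtend
    obtain ⟨M0, hM0⟩ := hXp.2
    obtain ⟨hYae, hlint0⟩ := hkey M0 hM0
    have hmeasYp : AEStronglyMeasurable (fun ω => |Y (σ ω) ω| ^ p) P :=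
      (hcont.measurable.comp_aemeasurable hYae).aestronglyMeasurable
    refine ⟨hYae, ⟨hmeasYp, ?_⟩, ?_⟩
    · rw [hasFiniteIntegral_iff_ofReal
        (ae_of_all _ fun ω => Real.rpow_nonneg (abs_nonneg _) p)]
      exact lt_of_le_of_lt hlint0 ENNReal.ofReal_lt_top
    · intro M hM
      have hMnn : 0 ≤ M := le_trans (integral_nonneg fun ω =>
        Real.rpow_nonneg (abs_nonneg _) p) (hM P hP)
      obtain ⟨_, hlint⟩ := hkey M hM
      rw [integral_eq_lintegral_of_nonneg_ae
        (ae_of_all _ fun ω => Real.rpow_nonneg (abs_nonneg _) p) hmeasYp]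
      calc (∫⁻ ω, ENNReal.ofReal (|Y (σ ω) ω| ^ p) ∂P).toReal
          ≤ (ENNReal.ofReal M).toReal := ENNReal.toReal_mono ENNReal.ofReal_ne_top hlint
        _ = M := ENNReal.toReal_ofReal hMnn
  refine ⟨fun σ hσ hσT P hP => ⟨(main σ hσ hσT P hP).2.1, (main σ hσ hσT P hP).2.2⟩, ?_⟩
  intro P hP ε hε
  haveI := hprob P hP
  obtain ⟨M', hM'⟩ := hXp.2
  set M := max M' 0 with hMdef
  have hM : ∀ P' ∈ 𝔓, ∫ ω, |X ω| ^ p ∂P' ≤ M := fun P' h => (hM' P' h).trans (le_max_left _ _)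
  have hMnn : 0 ≤ M := le_max_right _ _
  set c : ℝ := M / ε + 1 with hcdef
  have hc1 : 1 ≤ c := by
    have : 0 ≤ M / ε := div_nonneg hMnn hε.le
    simp only [hcdef]; linarith
  have hc0 : 0 < c := lt_of_lt_of_le one_pos hc1
  have hpm1 : (0:ℝ) < p - 1 := by linarith
  refine ⟨c ^ (1/(p-1)), ?_⟩
  intro σ hσ hσT
  obtain ⟨hYae, hInt, hbound⟩ := main σ hσ hσT P hP
  have hIb := hbound M hM
  have hK1 : 1 ≤ c ^ (1/(p-1)) := Real.one_le_rpow hc1 (by positivity)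
  have hKc : (c ^ (1/(p-1))) ^ (p-1) = c := by
    rw [← Real.rpow_mul hc0.le, show 1/(p-1) * (p-1) = 1 by field_simp]
    exact Real.rpow_one c
  have hptw : ∀ ω, c ^ (1/(p-1)) ≤ |Y (σ ω) ω| →
      |Y (σ ω) ω| ≤ |Y (σ ω) ω| ^ p / c := by
    intro ω hω
    have hy1 : 1 ≤ |Y (σ ω) ω| := le_trans hK1 hω
    have hy0 : (0:ℝ) < |Y (σ ω) ω| := lt_of_lt_of_le one_pos hy1
    have e : |Y (σ ω) ω| ^ p = |Y (σ ω) ω| ^ (p-1) * |Y (σ ω) ω| := by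
      have h2 := Real.rpow_add hy0 (p-1) 1
      rw [Real.rpow_one, show p-1+1 = p by ring] at h2
      exact h2
    have hge : c ≤ |Y (σ ω) ω| ^ (p-1) := by
      rw [← hKc]
      exact Real.rpow_le_rpow (by linarith) hω hpm1.le
    rw [le_div_iff₀ hc0]
    nlinarith [e, hge, hy0]
  have hAnull : NullMeasurableSet {ω | c ^ (1/(p-1)) ≤ |Y (σ ω) ω|} P := by
    have hA' : MeasurableSet {ω | c ^ (1/(p-1)) ≤ |hYae.mk _ ω|} :=
      measurableSet_le measurable_const hYae.measurable_mk.abs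
    refine NullMeasurableSet.congr hA'.nullMeasurableSet ?_
    refine Filter.eventuallyEq_set.mpr ?_
    filter_upwards [hYae.ae_eq_mk] with ω hω
    simp only [Set.mem_setOf_eq, hω]
  have hmemA : ∀ᵐ ω ∂P.restrict {ω | c ^ (1/(p-1)) ≤ |Y (σ ω) ω|},
      ω ∈ {ω | c ^ (1/(p-1)) ≤ |Y (σ ω) ω|} := ae_restrict_mem₀ hAnull
  have hInt1 : Integrable (fun ω => |Y (σ ω) ω|) P := by
    refine ((integrable_const (1:ℝ)).add hInt).mono'
      ((continuous_abs.measurable.comp_aemeasurable hYae).aestronglyMeasurable)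
      (ae_of_all _ fun ω => ?_)
    rw [Real.norm_eq_abs, abs_abs]
    exact abs_le_one_add_rpow hp (Y (σ ω) ω)
  calc ∫ ω in {ω | c ^ (1/(p-1)) ≤ |Y (σ ω) ω|}, |Y (σ ω) ω| ∂P
      ≤ ∫ ω in {ω | c ^ (1/(p-1)) ≤ |Y (σ ω) ω|}, |Y (σ ω) ω| ^ p / c ∂P := by
        refine integral_mono_ae hInt1.restrict (hInt.div_const c).restrict ?_
        filter_upwards [hmemA] with ω hω
        exact hptw ω hω
    _ = (∫ ω in {ω | c ^ (1/(p-1)) ≤ |Y (σ ω) ω|}, |Y (σ ω) ω| ^ p ∂P) / c := by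
        simpa using integral_div c (fun ω => |Y (σ ω) ω| ^ p)
          (μ := P.restrict {ω | c ^ (1/(p-1)) ≤ |Y (σ ω) ω|})
    _ ≤ M / c := by
        refine (div_le_div_iff_of_pos_right hc0).mpr ?_
        exact le_trans (setIntegral_le_integral hInt
          (ae_of_all _ fun ω => Real.rpow_nonneg (abs_nonneg _) p)) hIb
    _ ≤ ε := by
        rw [div_le_iff₀ hc0]
        have hεc : ε * c = M + ε := by
          rw [hcdef, mul_add, mul_div_assoc', mul_comm ε M, mul_div_assoc, div_self hε.ne']; ring
        linarith
end

section
/- Suppose E₀ : H → ℝ is (H_t)-locally strictly monotone. Let (E_t)_{t∈[0,T]} and (Ẽ_t)_{t∈[0,T]} be two families of maps E_t, Ẽ_t : H → L¹_𝒫 taking F°_t-measurable values such that: both families are (H_t)-positively homogeneous; E_t(H) ⊆ H_t and Ẽ_t(H) ⊆ H_t for all t; E₀(E_t(X)) = E₀(X) and E₀(Ẽ_t(X)) = E₀(X) for all t ∈ [0,T] and X ∈ H; and the time-0 maps of both families coincide with E₀. Then for every t ∈ [0,T] and every X ∈ H, E_t(X) = Ẽ_t(X) 𝒫-quasi-surely.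 (Uniqueness of positively homogeneous time-consistent dynamic extensions of E₀.) -/
open MeasureTheory Set Filter

/-- uniqueness of positively homogeneous, time-consistent dynamic
extensions of a locally strictly monotone sublinear expectation `E₀`. -/
theorem statement12 {T : ℝ} (hT : 0 < T) {d : ℕ}
    (𝔓 : Set (@Measure (PathSpace d) (rawSA d T))) (h𝔓 : 𝔓.Nonempty)
    (hprob : ∀ P ∈ 𝔓, IsProbabilityMeasure P)
    -- the chain of test-function spaces `(H_t)`
    (H : ℝ → Set (PathSpace d → ℝ))
    (hchain : ∀ s t : ℝ, 0 ≤ s → s ≤ t → t ≤ T → H s ⊆ H t)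
    (hH0 : H 0 = {f | ∃ c : ℝ, f = fun _ => c})
    (hlin : ∀ t ∈ Set.Icc (0 : ℝ) T, ∀ f ∈ H t, ∀ g ∈ H t,
      f + g ∈ H t ∧ (∀ c : ℝ, c • f ∈ H t) ∧ f ⊓ g ∈ H t ∧ f ⊔ g ∈ H t ∧
      (BddFun g → f * g ∈ H t))
    (hHL1 : ∀ f ∈ H T, MemL1 (rawSA d T) 𝔓 f)
    -- the static sublinear expectation `E₀`, as a map on (representatives of) `H = H_T`
    (E₀ : (PathSpace d → ℝ) → ℝ)
    (hE₀qs : ∀ f ∈ H T, ∀ g ∈ H T, IsPolar 𝔓 {ω | f ω ≠ g ω} → E₀ f = E₀ g)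
    -- `(H_t)`-local strict monotonicity of `E₀`
    (hLSM : ∀ t ∈ Set.Icc (0 : ℝ) T, ∀ X ∈ H t, ∀ Y ∈ H t,
      IsPolar 𝔓 {ω | X ω < Y ω} → (∃ P ∈ 𝔓, 0 < P {ω | Y ω < X ω}) →
      ∃ f ∈ H t, (∀ ω, f ω ∈ Set.Icc (0 : ℝ) 1) ∧ E₀ (Y * f) < E₀ (X * f))
    -- the two dynamic extensions
    (E Et : ℝ → (PathSpace d → ℝ) → (PathSpace d → ℝ))
    -- values: `F°_t`-measurable elements of `L¹_𝔓`
    (hEval : ∀ t ∈ Set.Icc (0 : ℝ) T, ∀ X ∈ H T,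
      Measurable[rawSA d t] (E t X) ∧ MemL1 (rawSA d T) 𝔓 (E t X))
    (hEtval : ∀ t ∈ Set.Icc (0 : ℝ) T, ∀ X ∈ H T,
      Measurable[rawSA d t] (Et t X) ∧ MemL1 (rawSA d T) 𝔓 (Et t X))
    -- `(H_t)`-positive homogeneity
    (hEph : ∀ t ∈ Set.Icc (0 : ℝ) T, ∀ X ∈ H T, ∀ φ ∈ H t, BddFun φ → 0 ≤ φ →
      IsPolar 𝔓 {ω | E t (X * φ) ω ≠ E t X ω * φ ω})
    (hEtph : ∀ t ∈ Set.Icc (0 : ℝ) T, ∀ X ∈ H T, ∀ φ ∈ H t, BddFun φ → 0 ≤ φ →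
      IsPolar 𝔓 {ω | Et t (X * φ) ω ≠ Et t X ω * φ ω})
    -- invariance: `E_t(H) ⊆ H_t`
    (hEinv : ∀ t ∈ Set.Icc (0 : ℝ) T, ∀ X ∈ H T, E t X ∈ H t)
    (hEtinv : ∀ t ∈ Set.Icc (0 : ℝ) T, ∀ X ∈ H T, Et t X ∈ H t)
    -- time consistency with `E₀`: `E₀ ∘ E_t = E₀`
    (hEcons : ∀ t ∈ Set.Icc (0 : ℝ) T, ∀ X ∈ H T, E₀ (E t X) = E₀ X)
    (hEtcons : ∀ t ∈ Set.Icc (0 : ℝ) T, ∀ X ∈ H T, E₀ (Et t X) = E₀ X)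
    -- the time-0 maps coincide with `E₀`
    (hE0 : ∀ X ∈ H T, E 0 X = fun _ => E₀ X)
    (hEt0 : ∀ X ∈ H T, Et 0 X = fun _ => E₀ X) :
    -- conclusion: the two extensions coincide quasi-surely
    ∀ t ∈ Set.Icc (0 : ℝ) T, ∀ X ∈ H T, IsPolar 𝔓 {ω | E t X ω ≠ Et t X ω} := by
  intro t ht X hX
  have ht0 : (0 : ℝ) ≤ t := ht.1
  have htT : t ≤ T := ht.2
  have hTIcc : T ∈ Set.Icc (0 : ℝ) T := ⟨hT.le, le_rfl⟩
  have hsub : H t ⊆ H T := hchain t T ht0 htT le_rfl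
  have hone : (fun _ : PathSpace d => (1 : ℝ)) ∈ H t := by
    apply hchain 0 t le_rfl ht0 htT
    rw [hH0]; exact ⟨1, rfl⟩
  have hZ : E t X ∈ H t := hEinv t ht X hX
  have hW : Et t X ∈ H t := hEtinv t ht X hX
  -- `E₀ (E_t X * φ) = E₀ (X * φ)` for every bounded nonnegative `φ ∈ H t`
  have heqE : ∀ φ ∈ H t, BddFun φ → (0 : PathSpace d → ℝ) ≤ φ →
      E₀ (E t X * φ) = E₀ (X * φ) := by
    intro φ hφ hbdd hpos
    have hφT : φ ∈ H T := hsub hφ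
    have hXφ : X * φ ∈ H T := (hlin T hTIcc X hX φ hφT).2.2.2.2 hbdd
    have hZφ : E t X * φ ∈ H T := hsub ((hlin t ht (E t X) hZ φ hφ).2.2.2.2 hbdd)
    have hEXφ : E t (X * φ) ∈ H T := hsub (hEinv t ht (X * φ) hXφ)
    have hpol := hEph t ht X hX φ hφ hbdd hpos
    have h1 : E₀ (E t (X * φ)) = E₀ (E t X * φ) := hE₀qs _ hEXφ _ hZφ hpol
    have h2 : E₀ (E t (X * φ)) = E₀ (X * φ) := hEcons t ht (X * φ) hXφ
    rw [← h1, h2]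
  have heqEt : ∀ φ ∈ H t, BddFun φ → (0 : PathSpace d → ℝ) ≤ φ →
      E₀ (Et t X * φ) = E₀ (X * φ) := by
    intro φ hφ hbdd hpos
    have hφT : φ ∈ H T := hsub hφ
    have hXφ : X * φ ∈ H T := (hlin T hTIcc X hX φ hφT).2.2.2.2 hbdd
    have hZφ : Et t X * φ ∈ H T := hsub ((hlin t ht (Et t X) hW φ hφ).2.2.2.2 hbdd)
    have hEXφ : Et t (X * φ) ∈ H T := hsub (hEtinv t ht (X * φ) hXφ)
    have hpol := hEtph t ht X hX φ hφ hbdd hpos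
    have h1 : E₀ (Et t (X * φ)) = E₀ (Et t X * φ) := hE₀qs _ hEXφ _ hZφ hpol
    have h2 : E₀ (Et t (X * φ)) = E₀ (X * φ) := hEtcons t ht (X * φ) hXφ
    rw [← h1, h2]
  -- key : if `E₀(A φ) = E₀(B φ)` for all bounded nonneg `φ ∈ H t`, then `{B < A}` is polar
  have key : ∀ A ∈ H t, ∀ B ∈ H t,
      (∀ φ ∈ H t, BddFun φ → (0 : PathSpace d → ℝ) ≤ φ → E₀ (A * φ) = E₀ (B * φ)) →
      IsPolar 𝔓 {ω | B ω < A ω} := by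
    intro A hA B hB heqAB
    by_contra hcon
    unfold IsPolar at hcon
    push_neg at hcon
    obtain ⟨P, hP, hPne⟩ := hcon
    have hPpos : 0 < P {ω | B ω < A ω} := pos_iff_ne_zero.mpr hPne
    -- construct the localizing function `f = min((A - B)⁺, 1) ∈ H t`
    set D : PathSpace d → ℝ := (A ⊔ B) + (-1 : ℝ) • B with hD
    have hDmem : D ∈ H t :=
      (hlin t ht (A ⊔ B) ((hlin t ht A hA B hB).2.2.2.1)
        ((-1 : ℝ) • B) ((hlin t ht B hB B hB).2.1 (-1))).1
    set f : PathSpace d → ℝ := D ⊓ (fun _ => (1 : ℝ)) with hf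
    have hfmem : f ∈ H t := (hlin t ht D hDmem _ hone).2.2.1
    have hfapp : ∀ ω, f ω = min (max (A ω) (B ω) + (-1) * B ω) 1 := by
      intro ω; rfl
    have hf0 : ∀ ω, 0 ≤ f ω := by
      intro ω; rw [hfapp]
      refine le_min ?_ zero_le_one
      have := le_max_right (A ω) (B ω)
      linarith
    have hf1 : ∀ ω, f ω ≤ 1 := fun ω => by rw [hfapp]; exact min_le_right _ _
    have hfzero : ∀ ω, A ω ≤ B ω → f ω = 0 := by
      intro ω hle; rw [hfapp, max_eq_right hle]
      have : B ω + (-1) * B ω = 0 := by ring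
      rw [this]; exact min_eq_left zero_le_one
    have hfpos : ∀ ω, B ω < A ω → 0 < f ω := by
      intro ω hlt; rw [hfapp, max_eq_left hlt.le]
      exact lt_min (by linarith) zero_lt_one
    have hfbdd : BddFun f := ⟨1, fun ω => abs_le.mpr ⟨by linarith [hf0 ω], hf1 ω⟩⟩
    have hAf : A * f ∈ H t := (hlin t ht A hA f hfmem).2.2.2.2 hfbdd
    have hBf : B * f ∈ H t := (hlin t ht B hB f hfmem).2.2.2.2 hfbdd
    -- `A f ≥ B f` everywhere
    have hAB : ∀ ω, (B * f) ω ≤ (A * f) ω := by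
      intro ω
      rcases le_or_gt (A ω) (B ω) with h | h
      · have h0 := hfzero ω h
        show B ω * f ω ≤ A ω * f ω
        rw [h0, mul_zero, mul_zero]
      · exact mul_le_mul_of_nonneg_right h.le (hf0 ω)
    have hpolar1 : IsPolar 𝔓 {ω | (A * f) ω < (B * f) ω} := by
      intro Q hQ
      have hemp : {ω | (A * f) ω < (B * f) ω} = ∅ :=
        Set.eq_empty_iff_forall_notMem.mpr fun ω h => absurd h (not_lt.mpr (hAB ω))
      rw [hemp]; exact measure_empty
    have hex : ∃ P ∈ 𝔓, 0 < P {ω | (B * f) ω < (A * f) ω} := by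
      refine ⟨P, hP, lt_of_lt_of_le hPpos (measure_mono ?_)⟩
      intro ω hω
      exact mul_lt_mul_of_pos_right hω (hfpos ω hω)
    obtain ⟨g, hg, hgIcc, hlt⟩ := hLSM t ht (A * f) hAf (B * f) hBf hpolar1 hex
    have hgbdd : BddFun g :=
      ⟨1, fun ω => abs_le.mpr ⟨by linarith [(hgIcc ω).1], (hgIcc ω).2⟩⟩
    have hfg : f * g ∈ H t := (hlin t ht f hfmem g hg).2.2.2.2 hgbdd
    have hfgbdd : BddFun (f * g) := by
      refine ⟨1, fun ω => ?_⟩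
      have : |(f * g) ω| = |f ω| * |g ω| := abs_mul _ _
      rw [this]
      calc |f ω| * |g ω| ≤ 1 * 1 := by
            apply mul_le_mul _ _ (abs_nonneg _) zero_le_one
            · exact abs_le.mpr ⟨by linarith [hf0 ω], hf1 ω⟩
            · exact abs_le.mpr ⟨by linarith [(hgIcc ω).1], (hgIcc ω).2⟩
        _ = 1 := one_mul 1
    have hfgpos : (0 : PathSpace d → ℝ) ≤ f * g :=
      fun ω => mul_nonneg (hf0 ω) (hgIcc ω).1
    have heqfg := heqAB (f * g) hfg hfgbdd hfgpos
    rw [mul_assoc, mul_assoc] at hlt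
    linarith
  have heq : ∀ φ ∈ H t, BddFun φ → (0 : PathSpace d → ℝ) ≤ φ →
      E₀ (E t X * φ) = E₀ (Et t X * φ) := by
    intro φ hφ h1 h2
    rw [heqE φ hφ h1 h2, heqEt φ hφ h1 h2]
  have h1 := key (E t X) hZ (Et t X) hW heq
  have h2 := key (Et t X) hW (E t X) hZ fun φ hφ hb hp => (heq φ hφ hb hp).symm
  intro P hP
  have hss : {ω | E t X ω ≠ Et t X ω} ⊆
      {ω | Et t X ω < E t X ω} ∪ {ω | E t X ω < Et t X ω} := by
    intro ω h
    rcases lt_or_gt_of_ne h with hh | hh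
    · exact Or.inr hh
    · exact Or.inl hh
  exact measure_mono_null hss (measure_union_null (h1 P hP) (h2 P hP))
end

section
/- Suppose Assumption A holds for X and every P ∈ 𝒫 satisfies the augmentation hypothesis. Let Y be the càdlàg E-martingale of X. Then for every t ∈ [0,T] and every P ∈ 𝒫, Y_t ≤ E°_t(X) P-a.s. (the càdlàg E-martingale never exceeds the raw conditional sublinear expectation). -/
open MeasureTheory Set Filter

/-- the càdlàg `E`-martingale never exceeds the raw conditional sublinear
expectation: `Y_t ≤ Eo_t(X)` `P`-a.s. for every `t ∈ [0,T]` and `P ∈ 𝔓`. -/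
theorem statement18 {T : ℝ} (hT : 0 < T) {d : ℕ}
    {m0 : MeasurableSpace (PathSpace d)}
    (𝔓 : Set (@Measure (PathSpace d) m0)) (h𝔓 : 𝔓.Nonempty)
    (hprob : ∀ P ∈ 𝔓, IsProbabilityMeasure P)
    (hB : rawSA d T ≤ m0)
    (hN : MeasurableSpace.generateFrom {N | IsPolar 𝔓 N} ≤ m0)
    -- Assumption A
    (X : PathSpace d → ℝ) (hX : MemL1 (rawSA d T) 𝔓 X)
    (hstable : StableUnderPastingE T d 𝔓)
    (Eo : ℝ → PathSpace d → ℝ)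
    (hEomeas : ∀ t ∈ Set.Icc (0 : ℝ) T, Measurable[rawSA d t] (Eo t))
    (hEoess : ∀ t ∈ Set.Icc (0 : ℝ) T, ∀ P ∈ 𝔓,
      IsEssSupOf P (condExpFam 𝔓 (rawSA d t) P X) (Eo t))
    -- augmentation hypothesis
    (hAug : ∀ P ∈ 𝔓, AugHyp T d 𝔓 P)
    -- `Y` : the càdlàg `E`-martingale of `X`
    (Y : ℝ → PathSpace d → ℝ)
    (hYpath : ∀ ω, IsCadlagPath T (fun t => Y t ω))
    (hYadp : ∀ t ∈ Set.Icc (0 : ℝ) T, Measurable[FhatSA T d 𝔓 t] (Y t))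
    (hYess : ∀ t ∈ Set.Icc (0 : ℝ) T, ∀ P ∈ 𝔓,
      IsEssSupOf P (condExpFam 𝔓 (FhatSA T d 𝔓 t) P X) (Y t)) :
    ∀ t ∈ Set.Icc (0 : ℝ) T, ∀ P ∈ 𝔓, Y t ≤ᵐ[P] Eo t := by
  intro t ht P hP
  have hraw_le_T : rawSA d t ≤ rawSA d T := rawSA_mono ht.2
  have hraw : rawSA d t ≤ m0 := hraw_le_T.trans hB
  have hm : FhatSA T d 𝔓 t ≤ m0 :=
    sup_le ((FplusSA_le T d t).trans hB) hN
  have hsub : rawSA d t ≤ FhatSA T d 𝔓 t := by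
    refine le_trans ?_ le_sup_left
    exact le_iInf₂ fun s hs => rawSA_mono (le_min hs.le ht.2)
  refine (hYess t ht P hP).2 (Eo t) ?_
  rintro f ⟨Q, ⟨hQ𝔓, hQeq⟩, rfl⟩
  haveI : IsProbabilityMeasure Q := hprob Q hQ𝔓
  haveI : SigmaFinite (Q.trim hm) := inferInstance
  haveI : SigmaFinite (Q.trim hraw) := inferInstance
  have hXint : Integrable X Q := hX.2.1 Q hQ𝔓
  -- the raw conditional expectation
  set g : PathSpace d → ℝ := condExp (rawSA d t) Q X with hg
  -- g is a.e.-equal (under Q) to the conditional expectation w.r.t. the augmented σ-algebra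
  have hgeq : g =ᵐ[Q] condExp (FhatSA T d 𝔓 t) Q X := by
    refine ae_eq_condExp_of_forall_setIntegral_eq hm hXint
      (fun s _ _ => integrable_condExp.integrableOn) (fun A hA _ => ?_) ?_
    · obtain ⟨A', hA', hnull⟩ := hAug Q hQ𝔓 t ht A hA
      have hAe : A =ᵐ[Q] A' := measure_symmDiff_eq_zero_iff.mp hnull
      calc ∫ x in A, g x ∂Q = ∫ x in A', g x ∂Q := setIntegral_congr_set hAe
        _ = ∫ x in A', X x ∂Q := setIntegral_condExp hraw hXint hA'
        _ = ∫ x in A, X x ∂Q := (setIntegral_congr_set hAe).symm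
    · exact StronglyMeasurable.aestronglyMeasurable
        (stronglyMeasurable_condExp.mono hsub)
  -- transfer the Q-a.e. equality to a P-a.e. equality, using Q = P on F̂_t
  have hmeasS : MeasurableSet[FhatSA T d 𝔓 t]
      {x | ¬ g x = condExp (FhatSA T d 𝔓 t) Q X x} := by
    have h1 : Measurable[FhatSA T d 𝔓 t] g :=
      (stronglyMeasurable_condExp.mono hsub).measurable
    have h2 : Measurable[FhatSA T d 𝔓 t] (condExp (FhatSA T d 𝔓 t) Q X) :=
      stronglyMeasurable_condExp.measurable
    exact (measurableSet_eq_fun (m := FhatSA T d 𝔓 t) h1 h2).compl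
  have hgeqP : g =ᵐ[P] condExp (FhatSA T d 𝔓 t) Q X := by
    have hQ0 : Q {x | ¬ g x = condExp (FhatSA T d 𝔓 t) Q X x} = 0 := hgeq
    have hP0 : P {x | ¬ g x = condExp (FhatSA T d 𝔓 t) Q X x} = 0 := by
      rw [← hQeq _ hmeasS]; exact hQ0
    exact hP0
  -- g is dominated by Eo t, P-a.s.
  have hgle : g ≤ᵐ[P] Eo t := by
    refine (hEoess t ht P hP).1 g ⟨Q, ⟨hQ𝔓, fun A hA => hQeq A (hsub A hA)⟩, rfl⟩
  filter_upwards [hgeqP, hgle] with x hx1 hx2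
  rw [← hx1]; exact hx2
end
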